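/- arXiv:1302.1999 — 9 statements merged into one kernel-verified Lean document; each statement's English description precedes it below -/
import Mathlib

section
/- The bivariate generating function of any stationary distribution of the exponentially-delayed-arrivals queue satisfies the boundary-value functional equation: for all complex z, y with |z| ≤ 1 and |y| ≤ 1, z·P(z,y) = (ρ(qy+pz) + 1−ρ)·[(z−1)·P(0, qy+pz) + P(z, qy+pz)]. -/
open scoped BigOperators

noncomputable section

/-- `b j l = C(l,j) p^j q^(l-j)` with `p = 1 - q`, and `b j l = 0` for `j > l`. -/
def binomB (q : ℝ) (j l : ℕ) : ℝ :=
  if j ≤ l then (Nat.choose l j : ℝ) * (1 - q) ^ j * q ^ (l - j) else 0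

/-- Transition kernel of the chain on `ℕ × ℕ`: from `(n, l)` move to
`(max (n-1) 0 + j, l + 1 - j)` with probability `ρ * b j (l+1)` for `0 ≤ j ≤ l + 1`,
and to `(max (n-1) 0 + j, l - j)` with probability `(1 - ρ) * b j l` for `0 ≤ j ≤ l`.
(In `ℕ`, `n - 1` is truncated subtraction, i.e. `max (n-1) 0`.) -/
def kernel (ρ q : ℝ) (s s' : ℕ × ℕ) : ℝ :=
  ρ * ∑ j ∈ Finset.range (s.2 + 2),
        (if s' = (s.1 - 1 + j, s.2 + 1 - j) then binomB q j (s.2 + 1) else 0) +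
    (1 - ρ) * ∑ j ∈ Finset.range (s.2 + 1),
        (if s' = (s.1 - 1 + j, s.2 - j) then binomB q j s.2 else 0)

/-- Bivariate generating function `P(z,y) = Σ_{n,l} P_{n,l} z^n y^l`. -/
def gf (P : ℕ × ℕ → ℝ) (z y : ℂ) : ℂ :=
  ∑' s : ℕ × ℕ, (P s : ℂ) * z ^ s.1 * y ^ s.2

end

set_option linter.unnecessarySeqFocus false

section Aux

lemma binomB_nonneg {q : ℝ} (hq0 : 0 ≤ q) (hq1 : q ≤ 1) (j l : ℕ) : 0 ≤ binomB q j l := by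
  unfold binomB
  split
  · have h1 : (0:ℝ) ≤ 1 - q := by linarith
    positivity
  · exact le_refl 0

lemma sumB (q : ℝ) (m : ℕ) (u v : ℂ) :
    ∑ j ∈ Finset.range (m+1), ((binomB q j m : ℝ) : ℂ) * u ^ j * v ^ (m - j)
      = ((1 - (q:ℂ)) * u + (q:ℂ) * v) ^ m := by
  rw [add_pow]
  refine Finset.sum_congr rfl fun j hj => ?_
  rw [Finset.mem_range, Nat.lt_succ_iff] at hj
  unfold binomB
  rw [if_pos hj, mul_pow, mul_pow]
  push_cast
  ring

lemma sumB_real (q : ℝ) (m : ℕ) :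
    ∑ j ∈ Finset.range (m+1), binomB q j m = 1 := by
  have h : ∑ j ∈ Finset.range (m+1), binomB q j m = ((1-q) + q)^m := by
    rw [add_pow]
    refine Finset.sum_congr rfl fun j hj => ?_
    rw [Finset.mem_range, Nat.lt_succ_iff] at hj
    unfold binomB
    rw [if_pos hj]
    ring
  simp [h]

lemma kernel_nonneg {ρ q : ℝ} (hρ0 : 0 ≤ ρ) (hρ1 : ρ ≤ 1) (hq0 : 0 ≤ q) (hq1 : q ≤ 1)
    (s s' : ℕ × ℕ) : 0 ≤ kernel ρ q s s' := by
  unfold kernel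
  have h1 : (0:ℝ) ≤ 1 - ρ := by linarith
  refine add_nonneg (mul_nonneg hρ0 (Finset.sum_nonneg fun j _ => ?_))
    (mul_nonneg h1 (Finset.sum_nonneg fun j _ => ?_)) <;>
  · split
    · exact binomB_nonneg hq0 hq1 _ _
    · exact le_refl 0

lemma kernel_hasSum (ρ q : ℝ) (s : ℕ × ℕ) :
    HasSum (fun s' => kernel ρ q s s') 1 := by
  have h1 : HasSum (fun s' : ℕ×ℕ => ∑ j ∈ Finset.range (s.2+2),
      (if s' = (s.1-1+j, s.2+1-j) then binomB q j (s.2+1) else 0))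
      (∑ j ∈ Finset.range (s.2+2), binomB q j (s.2+1)) :=
    hasSum_sum fun j _ => hasSum_ite_eq _ _
  have h2 : HasSum (fun s' : ℕ×ℕ => ∑ j ∈ Finset.range (s.2+1),
      (if s' = (s.1-1+j, s.2-j) then binomB q j s.2 else 0))
      (∑ j ∈ Finset.range (s.2+1), binomB q j s.2) :=
    hasSum_sum fun j _ => hasSum_ite_eq _ _
  have := (h1.mul_left ρ).add (h2.mul_left (1-ρ))
  rw [sumB_real, sumB_real] at this
  simpa [kernel] using this

lemma kernel_gf_hasSum (ρ q : ℝ) (z y : ℂ) (s : ℕ × ℕ) :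
    HasSum (fun s' : ℕ×ℕ => ((kernel ρ q s s' : ℝ):ℂ) * z ^ s'.1 * y ^ s'.2)
      (z ^ (s.1 - 1) * ((q:ℂ) * y + (1-(q:ℂ)) * z) ^ s.2 *
        ((ρ:ℂ) * ((q:ℂ) * y + (1-(q:ℂ)) * z) + 1 - (ρ:ℂ))) := by
  set w : ℂ := (q:ℂ) * y + (1-(q:ℂ)) * z with hw
  have key : ∀ s' : ℕ×ℕ, ((kernel ρ q s s' : ℝ):ℂ) * z ^ s'.1 * y ^ s'.2
      = (∑ j ∈ Finset.range (s.2+2), (if s' = (s.1-1+j, s.2+1-j) then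
          (ρ:ℂ) * ((binomB q j (s.2+1) : ℝ):ℂ) * z^(s.1-1+j) * y^(s.2+1-j) else 0))
      + (∑ j ∈ Finset.range (s.2+1), (if s' = (s.1-1+j, s.2-j) then
          (1 - (ρ:ℂ)) * ((binomB q j s.2 : ℝ):ℂ) * z^(s.1-1+j) * y^(s.2-j) else 0)) := by
    intro s'
    unfold kernel
    rw [Complex.ofReal_add, Complex.ofReal_mul, Complex.ofReal_mul,
      Complex.ofReal_sum, Complex.ofReal_sum]
    rw [add_mul, add_mul]
    congr 1
    · rw [Finset.mul_sum, Finset.sum_mul, Finset.sum_mul]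
      refine Finset.sum_congr rfl fun j _ => ?_
      split_ifs with h
      · subst h; push_cast; ring
      · simp
    · rw [Finset.mul_sum, Finset.sum_mul, Finset.sum_mul]
      refine Finset.sum_congr rfl fun j _ => ?_
      split_ifs with h
      · subst h; push_cast; ring
      · simp
  have h1 : HasSum (fun s' : ℕ×ℕ => ∑ j ∈ Finset.range (s.2+2),
      (if s' = (s.1-1+j, s.2+1-j) then
        (ρ:ℂ) * ((binomB q j (s.2+1) : ℝ):ℂ) * z^(s.1-1+j) * y^(s.2+1-j) else 0))
      (∑ j ∈ Finset.range (s.2+2),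
        (ρ:ℂ) * ((binomB q j (s.2+1) : ℝ):ℂ) * z^(s.1-1+j) * y^(s.2+1-j)) :=
    hasSum_sum fun j _ => hasSum_ite_eq _ _
  have h2 : HasSum (fun s' : ℕ×ℕ => ∑ j ∈ Finset.range (s.2+1),
      (if s' = (s.1-1+j, s.2-j) then
        (1-(ρ:ℂ)) * ((binomB q j s.2 : ℝ):ℂ) * z^(s.1-1+j) * y^(s.2-j) else 0))
      (∑ j ∈ Finset.range (s.2+1),
        (1-(ρ:ℂ)) * ((binomB q j s.2 : ℝ):ℂ) * z^(s.1-1+j) * y^(s.2-j)) :=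
    hasSum_sum fun j _ => hasSum_ite_eq _ _
  have e1 : ∑ j ∈ Finset.range (s.2+2),
      (ρ:ℂ) * ((binomB q j (s.2+1) : ℝ):ℂ) * z^(s.1-1+j) * y^(s.2+1-j)
      = (ρ:ℂ) * z^(s.1-1) * w^(s.2+1) := by
    have : ∑ j ∈ Finset.range (s.2+2),
        (ρ:ℂ) * ((binomB q j (s.2+1) : ℝ):ℂ) * z^(s.1-1+j) * y^(s.2+1-j)
        = (ρ:ℂ) * z^(s.1-1) * ∑ j ∈ Finset.range (s.2+2),
            ((binomB q j (s.2+1) : ℝ):ℂ) * z^j * y^(s.2+1-j) := by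
      rw [Finset.mul_sum]
      refine Finset.sum_congr rfl fun j _ => ?_
      rw [pow_add]
      ring
    rw [this, sumB]
    have hbase : (1-(q:ℂ))*z + (q:ℂ)*y = w := by rw [hw]; ring
    rw [hbase]
  have e2 : ∑ j ∈ Finset.range (s.2+1),
      (1-(ρ:ℂ)) * ((binomB q j s.2 : ℝ):ℂ) * z^(s.1-1+j) * y^(s.2-j)
      = (1-(ρ:ℂ)) * z^(s.1-1) * w^s.2 := by
    have : ∑ j ∈ Finset.range (s.2+1),
        (1-(ρ:ℂ)) * ((binomB q j s.2 : ℝ):ℂ) * z^(s.1-1+j) * y^(s.2-j)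
        = (1-(ρ:ℂ)) * z^(s.1-1) * ∑ j ∈ Finset.range (s.2+1),
            ((binomB q j s.2 : ℝ):ℂ) * z^j * y^(s.2-j) := by
      rw [Finset.mul_sum]
      refine Finset.sum_congr rfl fun j _ => ?_
      rw [pow_add]
      ring
    rw [this, sumB]
    have hbase : (1-(q:ℂ))*z + (q:ℂ)*y = w := by rw [hw]; ring
    rw [hbase]
  have htot := h1.add h2
  rw [e1, e2] at htot
  have : (ρ:ℂ) * z^(s.1-1) * w^(s.2+1) + (1-(ρ:ℂ)) * z^(s.1-1) * w^s.2
      = z ^ (s.1-1) * w ^ s.2 * ((ρ:ℂ) * w + 1 - (ρ:ℂ)) := by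
    rw [pow_succ]; ring
  rw [this] at htot
  have hfun : (fun s' : ℕ×ℕ => ((kernel ρ q s s' : ℝ):ℂ) * z ^ s'.1 * y ^ s'.2) = _ :=
    funext key
  rw [hfun]
  exact htot

end Aux

theorem stmt0 (ρ q : ℝ) (hρ : ρ ∈ Set.Ioo (0 : ℝ) 1) (hq : q ∈ Set.Ioo (0 : ℝ) 1)
    (P : ℕ × ℕ → ℝ) (hpos : ∀ s, 0 ≤ P s) (hsum : HasSum P 1)
    (hstat : ∀ s' : ℕ × ℕ, ∑' s : ℕ × ℕ, P s * kernel ρ q s s' = P s')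
    (z y : ℂ) (hz : ‖z‖ ≤ 1) (hy : ‖y‖ ≤ 1) :
    z * gf P z y =
      ((ρ : ℂ) * ((q : ℂ) * y + (1 - (q : ℂ)) * z) + 1 - (ρ : ℂ)) *
        ((z - 1) * gf P 0 ((q : ℂ) * y + (1 - (q : ℂ)) * z) +
          gf P z ((q : ℂ) * y + (1 - (q : ℂ)) * z)) := by
  obtain ⟨hρ0, hρ1⟩ := hρ
  obtain ⟨hq0, hq1⟩ := hq
  set w : ℂ := (q:ℂ) * y + (1 - (q:ℂ)) * z with hwdef
  have hPsum : Summable P := hsum.summable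
  have hw : ‖w‖ ≤ 1 := by
    calc ‖w‖ ≤ ‖(q:ℂ)*y‖ + ‖(1-(q:ℂ))*z‖ :=
          norm_add_le _ _
      _ = q * ‖y‖ + (1-q) * ‖z‖ := by
          rw [norm_mul, norm_mul]
          rw [Complex.norm_real, show ((1:ℂ) - (q:ℂ)) = ((1-q:ℝ):ℂ) by push_cast; ring,
            Complex.norm_real, Real.norm_eq_abs, Real.norm_eq_abs,
            abs_of_nonneg hq0.le, abs_of_nonneg (by linarith)]
      _ ≤ q * 1 + (1-q) * 1 := by
          gcongr <;> linarith
      _ = 1 := by ring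
  -- general summability
  have hgen : ∀ (a b : ℂ), ‖a‖ ≤ 1 → ‖b‖ ≤ 1 →
      Summable (fun s : ℕ×ℕ => (P s:ℂ) * a^s.1 * b^s.2) := by
    intro a b ha hb
    apply Summable.of_norm_bounded hPsum
    intro s
    rw [norm_mul, norm_mul, Complex.norm_real, Real.norm_eq_abs, abs_of_nonneg (hpos s)]
    calc P s * ‖a^s.1‖ * ‖b^s.2‖ ≤ P s * 1 * 1 := by
          rw [norm_pow, norm_pow]
          gcongr <;>
            first
              | exact mul_nonneg (hpos s) zero_le_one
              | exact hpos s
              | exact mul_nonneg (hpos s) (pow_nonneg (norm_nonneg a) _)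
              | exact pow_le_one₀ (norm_nonneg a) ha
              | exact pow_le_one₀ (norm_nonneg b) hb
      _ = P s := by ring
  -- summability on the product
  have hker_nn : ∀ s s', 0 ≤ kernel ρ q s s' :=
    kernel_nonneg hρ0.le hρ1.le hq0.le hq1.le
  have hrow : ∀ s : ℕ×ℕ, HasSum (fun s' => P s * kernel ρ q s s') (P s) := by
    intro s
    simpa using (kernel_hasSum ρ q s).mul_left (P s)
  have hprod : Summable (fun t : (ℕ×ℕ)×(ℕ×ℕ) => P t.1 * kernel ρ q t.1 t.2) := by
    rw [summable_prod_of_nonneg (fun t => mul_nonneg (hpos t.1) (hker_nn t.1 t.2))]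
    refine ⟨fun s => (hrow s).summable, ?_⟩
    have he : (fun s : ℕ×ℕ => ∑' s', P s * kernel ρ q s s') = P :=
      funext fun s => (hrow s).tsum_eq
    rw [he]
    exact hPsum
  have hprodC : Summable (Function.uncurry (fun s s' : ℕ×ℕ =>
      ((P s * kernel ρ q s s' : ℝ):ℂ) * z^s'.1 * y^s'.2)) := by
    apply Summable.of_norm_bounded hprod
    intro t
    simp only [Function.uncurry]
    rw [norm_mul, norm_mul, Complex.norm_real, Real.norm_eq_abs,
      abs_of_nonneg (mul_nonneg (hpos t.1) (hker_nn t.1 t.2)), norm_pow, norm_pow]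
    calc P t.1 * kernel ρ q t.1 t.2 * ‖z‖^t.2.1 * ‖y‖^t.2.2
        ≤ P t.1 * kernel ρ q t.1 t.2 * 1 * 1 := by
          gcongr <;>
            first
              | exact mul_nonneg (mul_nonneg (hpos t.1) (hker_nn t.1 t.2)) zero_le_one
              | exact mul_nonneg (hpos t.1) (hker_nn t.1 t.2)
              | exact mul_nonneg (mul_nonneg (hpos t.1) (hker_nn t.1 t.2))
                  (pow_nonneg (norm_nonneg z) _)
              | exact pow_le_one₀ (norm_nonneg z) hz
              | exact pow_le_one₀ (norm_nonneg y) hy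
      _ = P t.1 * kernel ρ q t.1 t.2 := by ring
  -- main computation
  have main : gf P z y =
      ∑' s : ℕ×ℕ, (P s:ℂ) * (z ^ (s.1-1) * w ^ s.2 * ((ρ:ℂ)*w + 1 - (ρ:ℂ))) := by
    have h1 : gf P z y
        = ∑' s' : ℕ×ℕ, ∑' s : ℕ×ℕ, ((P s * kernel ρ q s s' : ℝ):ℂ) * z^s'.1 * y^s'.2 := by
      unfold gf
      refine tsum_congr fun s' => ?_
      rw [← hstat s', Complex.ofReal_tsum, tsum_mul_right, tsum_mul_right]
    rw [h1, Summable.tsum_comm hprodC]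
    refine tsum_congr fun s => ?_
    have h2 : ∀ s' : ℕ×ℕ, ((P s * kernel ρ q s s' : ℝ):ℂ) * z^s'.1 * y^s'.2
        = (P s:ℂ) * (((kernel ρ q s s' : ℝ):ℂ) * z^s'.1 * y^s'.2) := by
      intro s'; push_cast; ring
    rw [tsum_congr h2, tsum_mul_left,
      ((kernel_gf_hasSum ρ q z y s).tsum_eq)]
  -- pointwise power identity
  have hpt : ∀ n : ℕ, z * z^(n-1) = z^n + (z-1) * (0:ℂ)^n := by
    intro n
    cases n with
    | zero => simp
    | succ m => simp [pow_succ]; ring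
  rw [main, ← tsum_mul_left]
  have h3 : ∀ s : ℕ×ℕ, z * ((P s:ℂ) * (z ^ (s.1-1) * w ^ s.2 * ((ρ:ℂ)*w + 1 - (ρ:ℂ))))
      = ((ρ:ℂ)*w + 1 - (ρ:ℂ)) * ((z-1) * ((P s:ℂ) * (0:ℂ)^s.1 * w^s.2)
          + (P s:ℂ) * z^s.1 * w^s.2) := by
    intro s
    have := hpt s.1
    calc z * ((P s:ℂ) * (z ^ (s.1-1) * w ^ s.2 * ((ρ:ℂ)*w + 1 - (ρ:ℂ))))
        = (z * z^(s.1-1)) * ((P s:ℂ) * w ^ s.2 * ((ρ:ℂ)*w + 1 - (ρ:ℂ))) := by ring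
      _ = (z^s.1 + (z-1) * (0:ℂ)^s.1) * ((P s:ℂ) * w ^ s.2 * ((ρ:ℂ)*w + 1 - (ρ:ℂ))) := by
          rw [this]
      _ = ((ρ:ℂ)*w + 1 - (ρ:ℂ)) * ((z-1) * ((P s:ℂ) * (0:ℂ)^s.1 * w^s.2)
            + (P s:ℂ) * z^s.1 * w^s.2) := by ring
  rw [tsum_congr h3, tsum_mul_left, Summable.tsum_add (((hgen 0 w (by simp) hw)).mul_left (z-1))
    (hgen z w hz hw), tsum_mul_left]
  rfl
end

section
/- The marginal generating function of the number of late customers under any stationary distribution of the exponentially-delayed-arrivals queue is a q-Pochhammer product: for all complex y with |y| ≤ 1, P(1,y) = ∏_{k=0}^{∞} (1 + ρ·q^{k+1}·(y−1)). -/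
open scoped BigOperators

lemma binom_row (q : ℝ) (x : ℂ) (m : ℕ) :
    ∑ j ∈ Finset.range (m+1), ((binomB q j m : ℝ) : ℂ) * x ^ (m - j)
      = (1 - (q:ℂ) + (q:ℂ) * x) ^ m := by
  rw [show (1 - (q:ℂ) + (q:ℂ) * x) = (1 - (q:ℂ)) + (q:ℂ) * x by ring, add_pow]
  refine Finset.sum_congr rfl fun j hj => ?_
  rw [Finset.mem_range, Nat.lt_succ_iff] at hj
  simp only [binomB, hj, if_true, mul_pow]
  push_cast
  ring

lemma key_row (x : ℂ) (n : ℕ) (m : ℕ) (c : ℕ → ℝ) :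
    HasSum (fun s' : ℕ × ℕ =>
      ((∑ j ∈ Finset.range (m+1), if s' = (n - 1 + j, m - j) then c j else 0 : ℝ) : ℂ) * x ^ s'.2)
      (∑ j ∈ Finset.range (m+1), (c j : ℂ) * x ^ (m - j)) := by
  have h := hasSum_sum (s := Finset.range (m+1))
    (f := fun j (s' : ℕ × ℕ) => if s' = (n - 1 + j, m - j) then (c j : ℂ) * x ^ (m - j) else 0)
    (a := fun j => (c j : ℂ) * x ^ (m - j)) (fun j _ => hasSum_ite_eq _ _)
  convert h using 1
  funext s'
  push_cast
  rw [Finset.sum_mul]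
  refine Finset.sum_congr rfl fun j _ => ?_
  split_ifs with hcase
  · rw [hcase]
  · simp

lemma kernel_row_hasSum (ρ q : ℝ) (x : ℂ) (s : ℕ × ℕ) :
    HasSum (fun s' : ℕ × ℕ => ((kernel ρ q s s' : ℝ) : ℂ) * x ^ s'.2)
      ((ρ : ℂ) * (1 - (q:ℂ) + (q:ℂ) * x) ^ (s.2 + 1)
        + (1 - (ρ:ℂ)) * (1 - (q:ℂ) + (q:ℂ) * x) ^ s.2) := by
  have h1 := (key_row x s.1 (s.2 + 1) (fun j => binomB q j (s.2 + 1))).mul_left (ρ : ℂ)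
  have h2 := (key_row x s.1 s.2 (fun j => binomB q j s.2)).mul_left ((1 - ρ : ℝ) : ℂ)
  have h := h1.add h2
  rw [binom_row, binom_row] at h
  convert h using 2 with s'
  · rfl
  · unfold kernel
    push_cast
    ring
  · push_cast
    ring

lemma kernel_row_hasSum_one (ρ q : ℝ) (s : ℕ × ℕ) :
    HasSum (fun s' : ℕ × ℕ => kernel ρ q s s') 1 := by
  have h := kernel_row_hasSum ρ q 1 s
  simp only [one_pow, mul_one] at h
  have hv : ((ρ : ℂ) * (1 - (q:ℂ) + (q:ℂ)) ^ (s.2 + 1)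
      + (1 - (ρ:ℂ)) * (1 - (q:ℂ) + (q:ℂ)) ^ s.2) = ((1 : ℝ) : ℂ) := by
    norm_num
  rw [hv] at h
  exact Complex.hasSum_ofReal.mp h

lemma G_summable {ρ q : ℝ} (hρ0 : 0 ≤ ρ) (hρ1 : ρ ≤ 1) (hq0 : 0 ≤ q) (hq1 : q ≤ 1)
    {P : ℕ × ℕ → ℝ} (hpos : ∀ s, 0 ≤ P s) (hP : Summable P) :
    Summable (fun ss : (ℕ × ℕ) × (ℕ × ℕ) => P ss.1 * kernel ρ q ss.1 ss.2) := by
  rw [summable_prod_of_nonneg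
    (fun ss => mul_nonneg (hpos ss.1) (kernel_nonneg hρ0 hρ1 hq0 hq1 ss.1 ss.2))]
  constructor
  · exact fun s => ((kernel_row_hasSum_one ρ q s).summable).mul_left (P s)
  · refine hP.congr fun s => ?_
    rw [((kernel_row_hasSum_one ρ q s).mul_left (P s)).tsum_eq, mul_one]

lemma F_summable {ρ q : ℝ} (hρ0 : 0 ≤ ρ) (hρ1 : ρ ≤ 1) (hq0 : 0 ≤ q) (hq1 : q ≤ 1)
    {P : ℕ × ℕ → ℝ} (hpos : ∀ s, 0 ≤ P s) (hP : Summable P)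
    {x : ℂ} (hx : ‖x‖ ≤ 1) :
    Summable (fun ss : (ℕ × ℕ) × (ℕ × ℕ) =>
      ((P ss.1 : ℝ) : ℂ) * ((kernel ρ q ss.1 ss.2 : ℝ) : ℂ) * x ^ ss.2.2) := by
  refine Summable.of_norm_bounded (G_summable hρ0 hρ1 hq0 hq1 hpos hP) fun ss => ?_
  rw [norm_mul, norm_mul, Complex.norm_real, Complex.norm_real, norm_pow,
    Real.norm_of_nonneg (hpos ss.1),
    Real.norm_of_nonneg (kernel_nonneg hρ0 hρ1 hq0 hq1 ss.1 ss.2)]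
  have h1 : ‖x‖ ^ ss.2.2 ≤ 1 := pow_le_one₀ (norm_nonneg x) hx
  have h2 : 0 ≤ P ss.1 * kernel ρ q ss.1 ss.2 :=
    mul_nonneg (hpos ss.1) (kernel_nonneg hρ0 hρ1 hq0 hq1 ss.1 ss.2)
  calc P ss.1 * kernel ρ q ss.1 ss.2 * ‖x‖ ^ ss.2.2 ≤ P ss.1 * kernel ρ q ss.1 ss.2 * 1 :=
        mul_le_mul_of_nonneg_left h1 h2
    _ = P ss.1 * kernel ρ q ss.1 ss.2 := mul_one _

lemma funcEq {ρ q : ℝ} (hρ0 : 0 ≤ ρ) (hρ1 : ρ ≤ 1) (hq0 : 0 ≤ q) (hq1 : q ≤ 1)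
    {P : ℕ × ℕ → ℝ} (hpos : ∀ s, 0 ≤ P s) (hP : Summable P)
    (hstat : ∀ s' : ℕ × ℕ, ∑' s : ℕ × ℕ, P s * kernel ρ q s s' = P s')
    {x : ℂ} (hx : ‖x‖ ≤ 1) :
    (∑' s : ℕ × ℕ, (P s : ℂ) * x ^ s.2)
      = (1 + (ρ:ℂ) * (q:ℂ) * (x - 1)) * ∑' s : ℕ × ℕ, (P s : ℂ) * (1 + (q:ℂ) * (x - 1)) ^ s.2 := by
  set F : (ℕ × ℕ) → (ℕ × ℕ) → ℂ :=
    fun s s' => ((P s : ℝ) : ℂ) * ((kernel ρ q s s' : ℝ) : ℂ) * x ^ s'.2 with hF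
  have hFsum : Summable (Function.uncurry F) := F_summable hρ0 hρ1 hq0 hq1 hpos hP hx
  -- left side
  have hL : (∑' s : ℕ × ℕ, (P s : ℂ) * x ^ s.2) = ∑' (s' : ℕ × ℕ) (s : ℕ × ℕ), F s s' := by
    refine tsum_congr fun s' => ?_
    have hrow : Summable (fun s : ℕ × ℕ => P s * kernel ρ q s s') :=
      (G_summable hρ0 hρ1 hq0 hq1 hpos hP).prod_symm.prod_factor s' |>.congr fun s => rfl
    have h1 : ∑' s : ℕ × ℕ, F s s'
        = (∑' s : ℕ × ℕ, ((P s * kernel ρ q s s' : ℝ) : ℂ)) * x ^ s'.2 := by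
      rw [← tsum_mul_right]
      exact tsum_congr fun s => by push_cast; ring
    rw [h1, ← Complex.ofReal_tsum, hstat s']
  -- right side
  have hT : ∀ l : ℕ, (ρ:ℂ) * (1 - (q:ℂ) + (q:ℂ) * x) ^ (l + 1)
      + (1 - (ρ:ℂ)) * (1 - (q:ℂ) + (q:ℂ) * x) ^ l
      = (1 + (ρ:ℂ) * (q:ℂ) * (x - 1)) * (1 + (q:ℂ) * (x - 1)) ^ l := by
    intro l
    have : (1 - (q:ℂ) + (q:ℂ) * x) = 1 + (q:ℂ) * (x - 1) := by ring
    rw [this, pow_succ]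
    ring
  have hR : (∑' (s : ℕ × ℕ) (s' : ℕ × ℕ), F s s')
      = (1 + (ρ:ℂ) * (q:ℂ) * (x - 1)) * ∑' s : ℕ × ℕ, (P s : ℂ) * (1 + (q:ℂ) * (x - 1)) ^ s.2 := by
    rw [← tsum_mul_left]
    refine tsum_congr fun s => ?_
    have hrow := (kernel_row_hasSum ρ q x s).mul_left ((P s : ℝ) : ℂ)
    have h2 : ∑' s' : ℕ × ℕ, F s s'
        = ((P s : ℝ) : ℂ) * ((ρ:ℂ) * (1 - (q:ℂ) + (q:ℂ) * x) ^ (s.2 + 1)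
            + (1 - (ρ:ℂ)) * (1 - (q:ℂ) + (q:ℂ) * x) ^ s.2) := by
      refine HasSum.tsum_eq (hrow.congr_fun fun s' => ?_)
      simp only [hF]
      ring
    rw [h2, hT s.2]
    ring
  rw [hL, hFsum.tsum_comm, hR]


open Filter Topology

theorem stmt2 (ρ q : ℝ) (hρ : ρ ∈ Set.Ioo (0 : ℝ) 1) (hq : q ∈ Set.Ioo (0 : ℝ) 1)
    (P : ℕ × ℕ → ℝ) (hpos : ∀ s, 0 ≤ P s) (hsum : HasSum P 1)
    (hstat : ∀ s' : ℕ × ℕ, ∑' s : ℕ × ℕ, P s * kernel ρ q s s' = P s')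
    (y : ℂ) (hy : ‖y‖ ≤ 1) :
    gf P 1 y = ∏' k : ℕ, (1 + (ρ : ℂ) * (q : ℂ) ^ (k + 1) * (y - 1)) := by
  obtain ⟨hρ0, hρ1⟩ := hρ
  obtain ⟨hq0, hq1⟩ := hq
  set g : ℂ → ℂ := fun x => ∑' s : ℕ × ℕ, (P s : ℂ) * x ^ s.2 with hg
  set f : ℕ → ℂ := fun k => 1 + (ρ:ℂ) * (q:ℂ) ^ (k + 1) * (y - 1) with hfdef
  -- the points x_n = 1 + q^n (y-1) stay in the closed unit disc
  have hxn : ∀ n : ℕ, ‖(1 + (q:ℂ) ^ n * (y - 1))‖ ≤ 1 := by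
    intro n
    have hqn1 : q ^ n ≤ 1 := pow_le_one₀ hq0.le hq1.le
    have h1 : (1 + (q:ℂ) ^ n * (y - 1)) = ((1 - q ^ n : ℝ) : ℂ) + ((q ^ n : ℝ) : ℂ) * y := by
      push_cast; ring
    rw [h1]
    calc ‖(((1 - q ^ n : ℝ) : ℂ) + ((q ^ n : ℝ) : ℂ) * y)‖
        ≤ ‖((1 - q ^ n : ℝ) : ℂ)‖ + ‖(((q ^ n : ℝ) : ℂ) * y)‖ :=
          norm_add_le _ _
      _ = (1 - q ^ n) + q ^ n * ‖y‖ := by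
          rw [norm_mul, Complex.norm_real, Complex.norm_real, Real.norm_eq_abs, Real.norm_eq_abs,
            abs_of_nonneg (by linarith), abs_of_nonneg (by positivity)]
      _ ≤ (1 - q ^ n) + q ^ n * 1 := by
          have := mul_le_mul_of_nonneg_left hy (by positivity : (0:ℝ) ≤ q ^ n)
          linarith
      _ = 1 := by ring
  -- iterate the functional equation
  have hiter : ∀ n : ℕ, g y = (∏ k ∈ Finset.range n, f k) * g (1 + (q:ℂ) ^ n * (y - 1)) := by
    intro n
    induction n with
    | zero =>
        simp only [Finset.range_zero, Finset.prod_empty, one_mul, pow_zero, one_mul]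
        norm_num
    | succ n ih =>
        have e1 : (1 + (ρ:ℂ) * (q:ℂ) * ((1 + (q:ℂ) ^ n * (y - 1)) - 1)) = f n := by
          simp only [hfdef]; push_cast; ring
        have e2 : (1 + (q:ℂ) * ((1 + (q:ℂ) ^ n * (y - 1)) - 1)) = 1 + (q:ℂ) ^ (n+1) * (y - 1) := by
          push_cast; ring
        have hgn : g (1 + (q:ℂ) ^ n * (y - 1)) = f n * g (1 + (q:ℂ) ^ (n+1) * (y - 1)) := by
          have hfe := funcEq hρ0.le hρ1.le hq0.le hq1.le hpos hsum.summable hstat (hxn n)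
          rw [e1] at hfe
          simp only [e2] at hfe
          exact hfe
        rw [ih, hgn, Finset.prod_range_succ]
        ring
  -- limit of g along x_n → 1
  have hvlim : Tendsto (fun n : ℕ => g (1 + (q:ℂ) ^ n * (y - 1))) atTop (𝓝 1) := by
    have hq' : ‖(q:ℂ)‖ < 1 := by
      rw [Complex.norm_real, Real.norm_of_nonneg hq0.le]; exact hq1
    have hx1 : Tendsto (fun n : ℕ => 1 + (q:ℂ) ^ n * (y - 1)) atTop (𝓝 1) := by
      have h0 := (tendsto_pow_atTop_nhds_zero_of_norm_lt_one hq').mul_const (y - 1)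
      have h0' : Tendsto (fun n : ℕ => (q:ℂ) ^ n * (y - 1)) atTop (𝓝 0) := by
        simpa using h0
      simpa using h0'.const_add 1
    have hmain := tendsto_tsum_of_dominated_convergence (𝓕 := atTop)
      (f := fun (n : ℕ) (s : ℕ × ℕ) => (P s : ℂ) * (1 + (q:ℂ) ^ n * (y - 1)) ^ s.2)
      (g := fun s : ℕ × ℕ => (P s : ℂ)) (bound := P) hsum.summable
      (fun s => by simpa using ((hx1.pow s.2).const_mul ((P s : ℝ) : ℂ)))
      (Filter.Eventually.of_forall fun n => fun s => by
        rw [norm_mul, Complex.norm_real, Real.norm_of_nonneg (hpos s), norm_pow]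
        have h1 : ‖(1 + (q:ℂ) ^ n * (y - 1))‖ ^ s.2 ≤ 1 :=
          pow_le_one₀ (norm_nonneg _) (hxn n)
        calc P s * ‖(1 + (q:ℂ) ^ n * (y - 1))‖ ^ s.2 ≤ P s * 1 :=
              mul_le_mul_of_nonneg_left h1 (hpos s)
          _ = P s := mul_one _)
    have hone : (∑' s : ℕ × ℕ, ((P s : ℝ) : ℂ)) = 1 := by
      rw [(Complex.hasSum_ofReal.mpr hsum).tsum_eq, Complex.ofReal_one]
    rw [hone] at hmain
    exact hmain
  -- the partial products converge to the infinite product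
  have hulim : Tendsto (fun n : ℕ => ∏ k ∈ Finset.range n, f k) atTop (𝓝 (∏' k, f k)) := by
    have hprod : HasProd f (∏' k, f k) := by
      by_cases hzero : ∃ k, f k = 0
      · obtain ⟨k₀, hk₀⟩ := hzero
        have hp : HasProd f 0 := by
          have hev : ∀ᶠ (S : Finset ℕ) in atTop, (fun S => ∏ i ∈ S, f i) S = 0 := by
            filter_upwards [Filter.eventually_ge_atTop ({k₀} : Finset ℕ)] with S hS
            exact Finset.prod_eq_zero (hS (Finset.mem_singleton_self k₀)) hk₀
          exact Tendsto.congr' (hev.mono fun S h => h.symm) tendsto_const_nhds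
        rw [hp.tprod_eq]
        exact hp
      · push_neg at hzero
        have hmult : Multipliable f := by
          have hlog : Summable fun k : ℕ => Complex.log (f k) := by
            obtain ⟨N, hN⟩ := exists_pow_lt_of_lt_one (by norm_num : (0:ℝ) < 1/4) hq1
            rw [← summable_nat_add_iff N]
            have hterm : ∀ k : ℕ, ‖Complex.log (f (k + N))‖ ≤ (3 * q ^ (N+1)) * q ^ k := by
              intro k
              have hw : ‖(ρ:ℂ) * (q:ℂ) ^ (k + N + 1) * (y - 1)‖ ≤ 2 * q ^ (N+1) * q ^ k := by
                rw [norm_mul, norm_mul, norm_pow, Complex.norm_real, Complex.norm_real,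
                  Real.norm_of_nonneg hρ0.le, Real.norm_of_nonneg hq0.le]
                have hy2 : ‖y - 1‖ ≤ 2 := by
                  calc ‖y - 1‖ ≤ ‖y‖ + ‖(1:ℂ)‖ := norm_sub_le _ _
                    _ ≤ 1 + 1 := by rw [norm_one]; exact add_le_add_left hy 1
                    _ = 2 := by norm_num
                have hqe : q ^ (k + N + 1) = q ^ (N+1) * q ^ k := by
                  rw [← pow_add]; ring_nf
                have h2 : ρ * q ^ (k + N + 1) * ‖y - 1‖ ≤ 1 * q ^ (k + N + 1) * 2 := by
                  have hq0' : (0:ℝ) ≤ q ^ (k + N + 1) := by positivity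
                  nlinarith [hpos, mul_nonneg hq0' (norm_nonneg (y-1))]
                calc ρ * q ^ (k + N + 1) * ‖y - 1‖ ≤ 1 * q ^ (k + N + 1) * 2 := h2
                  _ = 2 * q ^ (N+1) * q ^ k := by rw [hqe]; ring
              have hhalf : ‖(ρ:ℂ) * (q:ℂ) ^ (k + N + 1) * (y - 1)‖ ≤ 1/2 := by
                have hqN : q ^ (N+1) ≤ q ^ N := by
                  calc q ^ (N+1) = q * q ^ N := by ring
                    _ ≤ 1 * q ^ N := by
                        have : (0:ℝ) ≤ q ^ N := by positivity
                        nlinarith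
                    _ = q ^ N := one_mul _
                have hk1 : q ^ k ≤ 1 := pow_le_one₀ hq0.le hq1.le
                have h4 : 2 * q ^ (N+1) * q ^ k ≤ 2 * (1/4) * 1 := by
                  have hb : (0:ℝ) ≤ q ^ (N+1) := by positivity
                  have hb2 : (0:ℝ) ≤ q ^ k := by positivity
                  nlinarith
                linarith [hw]
              have hlog1 := Complex.norm_log_one_add_half_le_self hhalf
              have hfk : f (k + N) = 1 + (ρ:ℂ) * (q:ℂ) ^ (k + N + 1) * (y - 1) := rfl
              rw [hfk]
              calc ‖Complex.log (1 + (ρ:ℂ) * (q:ℂ) ^ (k + N + 1) * (y - 1))‖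
                  ≤ 3/2 * ‖(ρ:ℂ) * (q:ℂ) ^ (k + N + 1) * (y - 1)‖ := hlog1
                _ ≤ 3/2 * (2 * q ^ (N+1) * q ^ k) := by linarith [hw]
                _ = (3 * q ^ (N+1)) * q ^ k := by ring
            exact Summable.of_norm_bounded
              ((summable_geometric_of_lt_one hq0.le hq1).mul_left (3 * q ^ (N+1))) hterm
          exact Complex.multipliable_of_summable_log hlog
        exact hmult.hasProd
    exact hprod.tendsto_prod_nat
  -- combine
  have hcomb : Tendsto (fun n : ℕ => (∏ k ∈ Finset.range n, f k) *
      g (1 + (q:ℂ) ^ n * (y - 1))) atTop (𝓝 ((∏' k, f k) * 1)) := hulim.mul hvlim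
  have hconst : (fun n : ℕ => (∏ k ∈ Finset.range n, f k) *
      g (1 + (q:ℂ) ^ n * (y - 1))) = fun _ => g y := funext fun n => (hiter n).symm
  rw [hconst] at hcomb
  have hgy : g y = (∏' k, f k) * 1 := tendsto_nhds_unique tendsto_const_nhds hcomb
  have hgf : gf P 1 y = g y := by
    unfold gf
    exact tsum_congr fun s => by rw [one_pow, mul_one]
  rw [hgf, hgy, mul_one]
end

section
/- Under the assumptions on F, the zeroth-order coefficient of the power expansion in q is P^(0)(z,y) = 1 + ρ(z−1). -/
open scoped BigOperators

noncomputable section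

/-- Polynomials in `z` (outer variable) with coefficients polynomials in `y` (inner variable);
this is the ring in which the coefficients `P^(k)(z,y)` live. -/
abbrev Bzy : Type := Polynomial (Polynomial ℂ)

/-- The variable `y` as an element of `Bzy` (the outer variable `Polynomial.X` is `z`). -/
def yB : Bzy := Polynomial.C Polynomial.X

/-- A complex constant as an element of `Bzy`. -/
def cB (c : ℂ) : Bzy := Polynomial.C (Polynomial.C c)

/-- The power series `u = z + q (y - z)` in the variable `q`, with coefficients in `Bzy`. -/
def useries : PowerSeries Bzy :=
  PowerSeries.C (R := Bzy) Polynomial.X + PowerSeries.X * PowerSeries.C (R := Bzy) (yB - Polynomial.X)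

/-- The inclusion of complex constants into `Bzy[[q]]`. -/
def constHom : ℂ →+* PowerSeries Bzy :=
  (PowerSeries.C (R := Bzy)).comp
    ((Polynomial.C : Polynomial ℂ →+* Bzy).comp (Polynomial.C : ℂ →+* Polynomial ℂ))

/-- Substitution of `u = z + q(y-z)` for the variable in a polynomial in `y`. -/
def substY : Polynomial ℂ →+* PowerSeries Bzy :=
  Polynomial.eval₂RingHom constHom useries

/-- Substitution `z ↦ z`, `y ↦ u = z + q(y-z)` in a polynomial in `z` and `y`. -/
def substZY : Bzy →+* PowerSeries Bzy :=
  Polynomial.eval₂RingHom substY (PowerSeries.C (R := Bzy) Polynomial.X)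

/-- The formal functional equation `z·F(z,y) = (1-ρ+ρu)·[(z-1)·F(0,u) + F(z,u)]`, where
`F = Σ_k q^k P^(k)(z,y)`, `F(0,u)` is obtained by setting `z = 0` (i.e. taking the coefficient
of `z^0`) and substituting `u` for `y`, and `F(z,u)` by substituting `u` for `y`; the `m`-th
coefficient of `F(z,u)` is `Σ_{k ≤ m} [q^(m-k)] (P^(k)(z, z + q(y-z)))`, and similarly
for `F(0,u)`. -/
def FuncEq (ρ : ℝ) (P : ℕ → Bzy) : Prop :=
  PowerSeries.C (R := Bzy) Polynomial.X * PowerSeries.mk (fun k => P k) =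
    (constHom (1 - (ρ : ℂ)) + constHom (ρ : ℂ) * useries) *
      (PowerSeries.C (R := Bzy) (Polynomial.X - 1) *
          PowerSeries.mk (fun m => ∑ k ∈ Finset.range (m + 1),
            PowerSeries.coeff (R := Bzy) (m - k) (substY ((P k).coeff 0))) +
        PowerSeries.mk (fun m => ∑ k ∈ Finset.range (m + 1),
          PowerSeries.coeff (R := Bzy) (m - k) (substZY (P k))))

/-- `P^(0)(z,y)` does not depend on `y`. -/
def IndepY (P : ℕ → Bzy) : Prop := ∀ n : ℕ, ∃ c : ℂ, (P 0).coeff n = Polynomial.C c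

/-- Boundary conditions: `P^(0)(0,1) = 1 - ρ` and `P^(k)(0,1) = 0` for all `k ≥ 1`. -/
def Boundary (ρ : ℝ) (P : ℕ → Bzy) : Prop :=
  ((P 0).coeff 0).eval 1 = 1 - (ρ : ℂ) ∧ ∀ k : ℕ, 1 ≤ k → ((P k).coeff 0).eval 1 = 0

/-- Derivative with respect to the inner variable `y`. -/
def dy (p : Bzy) : Bzy :=
  p.sum fun n a => Polynomial.C (Polynomial.derivative a) * Polynomial.X ^ n

/-- The polynomial `P^(k)(0,y) + (P^(k)(z,y) - P^(k)(0,y))/z`, where the quotient is exact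
polynomial division by the monic polynomial `z`. -/
def bracket (P : ℕ → Bzy) (k : ℕ) : Bzy :=
  Polynomial.C ((P k).coeff 0) + (P k - Polynomial.C ((P k).coeff 0)) /ₘ Polynomial.X

/-- `a_j^k(z) = ∂_y^j [P^(k)(0,y) + (P^(k)(z,y) - P^(k)(0,y))/z] |_{y=z}`, a polynomial
in the single variable `z`. -/
def aCoef (P : ℕ → Bzy) (j k : ℕ) : Polynomial ℂ :=
  Polynomial.eval₂ (RingHom.id (Polynomial ℂ)) Polynomial.X ((dy^[j]) (bracket P k))

/-- Reinterpret a polynomial in the single variable `z` as an element of `Bzy`. -/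
def embZ : Polynomial ℂ →+* Bzy := Polynomial.mapRingHom (Polynomial.C : ℂ →+* Polynomial ℂ)

/-- `A_j^k(z) = jρ a_{j-1}^{k-j}(z) + (1+ρ(z-1)) a_j^{k-j}(z)` for `1 ≤ j ≤ k`,
`A_0^0(z) = 1 + ρ(z-1)`, and `A_j^k(z) = 0` otherwise. -/
def Acoef (ρ : ℝ) (P : ℕ → Bzy) (j k : ℕ) : Polynomial ℂ :=
  if 1 ≤ j ∧ j ≤ k then
    (j : Polynomial ℂ) * Polynomial.C (ρ : ℂ) * aCoef P (j - 1) (k - j) +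
      (1 + Polynomial.C (ρ : ℂ) * (Polynomial.X - 1)) * aCoef P j (k - j)
  else if j = 0 ∧ k = 0 then 1 + Polynomial.C (ρ : ℂ) * (Polynomial.X - 1)
  else 0

end


section aux2

lemma constCoeff_useries : PowerSeries.constantCoeff (R := Bzy) useries = Polynomial.X := by
  simp [useries]

lemma constCoeff_substY (p : Polynomial ℂ) :
    PowerSeries.constantCoeff (R := Bzy) (substY p) = embZ p := by
  have h : ((PowerSeries.constantCoeff (R := Bzy)).comp substY) = embZ := by
    apply Polynomial.ringHom_ext
    · intro c; simp [substY, constHom, embZ]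
    · simp [substY, constHom, embZ, constCoeff_useries]
  exact RingHom.congr_fun h p

lemma constCoeff_substZY (p : Bzy) :
    PowerSeries.constantCoeff (R := Bzy) (substZY p)
      = Polynomial.eval₂RingHom embZ Polynomial.X p := by
  have h : ((PowerSeries.constantCoeff (R := Bzy)).comp substZY)
      = Polynomial.eval₂RingHom embZ Polynomial.X := by
    apply Polynomial.ringHom_ext
    · intro a
      simp [substZY, constCoeff_substY]
    · simp [substZY]
  exact RingHom.congr_fun h p

lemma eval2_embZ_fix (Q : Polynomial ℂ) :
    Polynomial.eval₂RingHom embZ Polynomial.X (embZ Q) = embZ Q := by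
  have h : (Polynomial.eval₂RingHom embZ Polynomial.X).comp embZ = embZ := by
    apply Polynomial.ringHom_ext
    · intro c; simp [embZ]
    · simp [embZ]
  exact RingHom.congr_fun h Q

end aux2

theorem stmt4 (ρ : ℝ) (hρ : ρ ∈ Set.Ioo (0 : ℝ) 1) (P : ℕ → Bzy)
    (hF : FuncEq ρ P) (hI : IndepY P) (hB : Boundary ρ P) :
    P 0 = 1 + cB (ρ : ℂ) * (Polynomial.X - 1) := by
  obtain ⟨hB0, -⟩ := hB
  -- P 0 is y-independent: write it as embZ Q
  set Q : Polynomial ℂ := (P 0).map (Polynomial.evalRingHom (0 : ℂ)) with hQ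
  have hP0 : P 0 = embZ Q := by
    ext n m
    obtain ⟨c, hc⟩ := hI n
    simp [embZ, hQ, Polynomial.coeff_map, hc]
  -- boundary gives the constant coefficient
  obtain ⟨c0, hc0⟩ := hI 0
  have hc0val : c0 = 1 - (ρ : ℂ) := by
    rw [hc0] at hB0; simpa using hB0
  -- take constant coefficients in the functional equation
  have key := congrArg (PowerSeries.constantCoeff (R := Bzy)) hF
  simp only [map_mul, map_add, PowerSeries.constantCoeff_C, PowerSeries.constantCoeff_mk,
    Finset.sum_range_one, Nat.sub_zero, PowerSeries.coeff_zero_eq_constantCoeff,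
    constCoeff_useries, constCoeff_substY, constCoeff_substZY,
    PowerSeries.constantCoeff_X, mul_zero, zero_mul, add_zero, zero_add] at key
  have hconst : ∀ c : ℂ, PowerSeries.constantCoeff (R := Bzy) (constHom c) = cB c := by
    intro c; simp [constHom, cB]
  rw [hconst, hconst, hc0, hP0, eval2_embZ_fix] at key
  have hembC : embZ (Polynomial.C c0) = cB c0 := by simp [embZ, cB]
  rw [hembC, hc0val] at key
  -- now key : X * embZ Q = (cB (1-ρ) + cB ρ * X) * ((X-1) * cB (1-ρ) + embZ Q)
  have hcBsub : cB (1 - (ρ : ℂ)) = 1 - cB (ρ : ℂ) := by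
    simp [cB, map_sub, map_one]
  rw [hcBsub] at key
  have hne : ((1 - cB (ρ : ℂ)) * (Polynomial.X - 1) : Bzy) ≠ 0 := by
    apply mul_ne_zero
    · rw [hcBsub.symm]
      simp only [cB, ne_eq, Polynomial.C_eq_zero]
      intro h
      have h2 : (1:ℂ) = (ρ:ℂ) := sub_eq_zero.mp h
      have h3 := congrArg Complex.re h2
      simp at h3
      linarith [hρ.2]
    · intro h
      have := congrArg (Polynomial.coeff · 1) h
      simp [Polynomial.coeff_one] at this
  rw [hP0]
  apply mul_left_cancel₀ hne
  linear_combination key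
end

section
/- Under the assumptions on F, the coefficients of the power expansion in q satisfy the recursion: for every k ≥ 1, P^(k)(z,y) = Σ_{j=1}^{k} ((y−z)^j / j!)·[ jρ·a_{j−1}^{k−j}(z) + (1+ρ(z−1))·a_j^{k−j}(z) ] + (1+ρ(z−1))·P^(k)(0,z)/(1−ρ), as an identity of polynomials in z and y. -/
open scoped BigOperators

noncomputable section
namespace Stmt5Aux
open Polynomial PowerSeries

/-- Evaluation `y := z` (diagonal), landing in one-variable polynomials. -/
def evalD : Bzy →+* Polynomial ℂ := Polynomial.eval₂RingHom (RingHom.id _) Polynomial.X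

lemma coeff_dy (p : Bzy) (n : ℕ) : (dy p).coeff n = Polynomial.derivative (p.coeff n) := by
  classical
  unfold dy
  rw [Polynomial.sum_def, Polynomial.finset_sum_coeff]
  simp only [Polynomial.C_mul_X_pow_eq_monomial, Polynomial.coeff_monomial]
  rw [Finset.sum_ite_eq' p.support n (fun m => Polynomial.derivative (p.coeff m))]
  by_cases h : n ∈ p.support
  · simp [h]
  · simp only [h, if_false]
    rw [Polynomial.notMem_support_iff.mp h, map_zero]

lemma coeff_dy_iter (j : ℕ) (p : Bzy) (n : ℕ) :
    ((dy^[j]) p).coeff n = (Polynomial.derivative^[j]) (p.coeff n) := by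
  induction j generalizing p with
  | zero => simp
  | succ j ih =>
    rw [Function.iterate_succ_apply, Function.iterate_succ_apply, ih, coeff_dy]

lemma dy_iter_add (j : ℕ) (p q : Bzy) : (dy^[j]) (p + q) = (dy^[j]) p + (dy^[j]) q := by
  ext n
  simp [coeff_dy_iter, Polynomial.coeff_add, iterate_map_add]

lemma dy_iter_monomial (j m : ℕ) (a : Polynomial ℂ) :
    (dy^[j]) (Polynomial.monomial m a) = Polynomial.monomial m ((Polynomial.derivative^[j]) a) := by
  ext n
  rw [coeff_dy_iter, Polynomial.coeff_monomial, Polynomial.coeff_monomial]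
  by_cases h : m = n
  · simp [h]
  · simp [h]

lemma aCoef_eq (P : ℕ → Bzy) (j k : ℕ) : aCoef P j k = evalD ((dy^[j]) (bracket P k)) := rfl

lemma evalD_cB (c : ℂ) : evalD (cB c) = Polynomial.C c := by
  simp [evalD, cB]

lemma evalD_yB : evalD yB = Polynomial.X := by
  simp [evalD, yB]

lemma evalD_X : evalD Polynomial.X = Polynomial.X := by
  simp [evalD]

lemma evalD_embZ (p : Polynomial ℂ) : evalD (embZ p) = p := by
  induction p using Polynomial.induction_on' with
  | add p q hp hq => rw [map_add, map_add, hp, hq]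
  | monomial n a =>
    rw [embZ, Polynomial.mapRingHom]
    simp only [RingHom.coe_mk, MonoidHom.coe_mk, OneHom.coe_mk]
    rw [Polynomial.map_monomial]
    simp [evalD, Polynomial.eval₂_monomial, Polynomial.C_mul_X_pow_eq_monomial]

lemma coeff_CXpow (b : Bzy) (k n : ℕ) :
    PowerSeries.coeff (R := Bzy) n (PowerSeries.C (R := Bzy) b * PowerSeries.X ^ k) =
      if n = k then b else 0 := by
  rw [PowerSeries.coeff_C_mul, PowerSeries.coeff_X_pow]
  split <;> simp

lemma coeff_useries_pow (i n : ℕ) :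
    PowerSeries.coeff (R := Bzy) n (useries ^ i) =
      (i.choose n) • ((yB - Polynomial.X) ^ n * Polynomial.X ^ (i - n)) := by
  classical
  have hterm : ∀ k : ℕ,
      (PowerSeries.X * PowerSeries.C (R := Bzy) (yB - Polynomial.X)) ^ k *
          PowerSeries.C (R := Bzy) Polynomial.X ^ (i - k) * (i.choose k : PowerSeries Bzy) =
        PowerSeries.C (R := Bzy)
            ((i.choose k) • ((yB - Polynomial.X) ^ k * Polynomial.X ^ (i - k))) *
          PowerSeries.X ^ k := by
    intro k
    rw [mul_pow, ← map_pow, ← map_pow, nsmul_eq_mul, map_mul, map_mul,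
      map_natCast (PowerSeries.C (R := Bzy)) (i.choose k)]
    ring
  rw [useries, add_comm, add_pow, map_sum]
  calc ∑ k ∈ Finset.range (i + 1),
        PowerSeries.coeff (R := Bzy) n
          ((PowerSeries.X * PowerSeries.C (R := Bzy) (yB - Polynomial.X)) ^ k *
            PowerSeries.C (R := Bzy) Polynomial.X ^ (i - k) * (i.choose k : PowerSeries Bzy))
      = ∑ k ∈ Finset.range (i + 1),
          if n = k then (i.choose k) • ((yB - Polynomial.X) ^ k * Polynomial.X ^ (i - k))
          else 0 := by
        refine Finset.sum_congr rfl fun k _ => ?_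
        rw [hterm k, coeff_CXpow]
    _ = _ := by
        rw [Finset.sum_ite_eq (Finset.range (i + 1)) n
          (fun k => (i.choose k) • ((yB - Polynomial.X) ^ k * Polynomial.X ^ (i - k)))]
        by_cases h : n ∈ Finset.range (i + 1)
        · simp [h]
        · have : i < n := by simpa using Nat.lt_of_succ_le (by simpa [Finset.mem_range] using h)
          simp [h, Nat.choose_eq_zero_of_lt this]
lemma constHom_eq (c : ℂ) : constHom c = PowerSeries.C (R := Bzy) (cB c) := rfl

lemma cB_mul (a b : ℂ) : cB a * cB b = cB (a * b) := by simp [cB]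

lemma cB_natCast (N : ℕ) : cB (N : ℂ) = (N : Bzy) := by simp [cB]

lemma embZ_C (c : ℂ) : embZ (Polynomial.C c) = cB c := by simp [embZ, cB]

lemma embZ_X : embZ Polynomial.X = Polynomial.X := by simp [embZ]

lemma substZY_monomial (m : ℕ) (a : Polynomial ℂ) :
    substZY (Polynomial.monomial m a) = substY a * PowerSeries.C (R := Bzy) (Polynomial.X ^ m) := by
  simp [substZY, Polynomial.eval₂_monomial, map_pow]

lemma substY_monomial (i : ℕ) (c : ℂ) :
    substY (Polynomial.monomial i c) = constHom c * useries ^ i := by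
  simp [substY, Polynomial.eval₂_monomial]

lemma evalD_monomial (m : ℕ) (b : Polynomial ℂ) :
    evalD (Polynomial.monomial m b) = b * Polynomial.X ^ m := by
  simp [evalD, Polynomial.eval₂_monomial]

lemma choose_scalar (i n : ℕ) :
    ((i.choose n : ℕ) : Bzy) = cB ((n.factorial : ℂ)⁻¹) * cB ((i.descFactorial n : ℕ) : ℂ) := by
  rw [cB_mul]
  have h : (n.factorial : ℂ)⁻¹ * ((i.descFactorial n : ℕ) : ℂ) = ((i.choose n : ℕ) : ℂ) := by
    rw [Nat.descFactorial_eq_factorial_mul_choose]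
    have hn : (n.factorial : ℂ) ≠ 0 := Nat.cast_ne_zero.mpr n.factorial_ne_zero
    push_cast
    field_simp
  rw [h, cB_natCast]

lemma coeff_substZY (p : Bzy) (n : ℕ) :
    PowerSeries.coeff (R := Bzy) n (substZY p) =
      cB ((n.factorial : ℂ)⁻¹) * (yB - Polynomial.X) ^ n * embZ (evalD ((dy^[n]) p)) := by
  induction p using Polynomial.induction_on' with
  | add p q hp hq => rw [map_add, map_add, dy_iter_add, map_add, map_add, hp, hq]; ring
  | monomial m a =>
    induction a using Polynomial.induction_on' with
    | add a b ha hb =>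
      have : (Polynomial.monomial m) (a + b) =
          Polynomial.monomial m a + Polynomial.monomial m b := by rw [map_add]
      rw [this, map_add, map_add, dy_iter_add, map_add, map_add, ha, hb]; ring
    | monomial i c =>
      have hd : (Polynomial.derivative^[n]) ((Polynomial.monomial i) c) =
          Polynomial.C c *
            (Polynomial.C ((i.descFactorial n : ℕ) : ℂ) * Polynomial.X ^ (i - n)) := by
        rw [← Polynomial.C_mul_X_pow_eq_monomial, Polynomial.iterate_derivative_C_mul,
          Polynomial.iterate_derivative_X_pow_eq_C_mul]
      rw [substZY_monomial, substY_monomial, constHom_eq, mul_assoc, PowerSeries.coeff_C_mul,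
        PowerSeries.coeff_mul_C, coeff_useries_pow, dy_iter_monomial, hd, evalD_monomial]
      rw [map_mul, map_mul, map_mul, map_pow, map_pow, embZ_C, embZ_C, embZ_X]
      rw [nsmul_eq_mul, choose_scalar i n]
      push_cast
      ring
lemma substZY_C (a : Polynomial ℂ) : substZY (Polynomial.C a) = substY a := by
  simp [substZY]

lemma substZY_X : substZY (Polynomial.X : Bzy) = PowerSeries.C (R := Bzy) Polynomial.X := by
  simp [substZY]

lemma X_mul_divX (p : Bzy) :
    Polynomial.X * ((p - Polynomial.C (p.coeff 0)) /ₘ Polynomial.X) =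
      p - Polynomial.C (p.coeff 0) := by
  have h := Polynomial.modByMonic_add_div (p - Polynomial.C (p.coeff 0))
    (Polynomial.X : Bzy)
  rw [Polynomial.modByMonic_X] at h
  have h0 : (p - Polynomial.C (p.coeff 0)).eval 0 = 0 := by
    simp [Polynomial.eval_sub, ← Polynomial.coeff_zero_eq_eval_zero]
  rw [h0, map_zero, zero_add] at h
  exact h

lemma CX_mul_substZY_bracket (P : ℕ → Bzy) (k : ℕ) :
    PowerSeries.C (R := Bzy) Polynomial.X * substZY (bracket P k) =
      PowerSeries.C (R := Bzy) (Polynomial.X - 1) * substY ((P k).coeff 0) + substZY (P k) := by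
  have h1 : (Polynomial.X : Bzy) * bracket P k =
      Polynomial.X * Polynomial.C ((P k).coeff 0) + (P k - Polynomial.C ((P k).coeff 0)) := by
    rw [bracket, mul_add, X_mul_divX]
  have h2 := congrArg substZY h1
  rw [map_mul, substZY_X] at h2
  rw [h2]
  rw [map_add, map_mul, map_sub, substZY_X, substZY_C, map_sub, map_one]
  ring

lemma Tsum (P : ℕ → Bzy) (m : ℕ) :
    (∑ k ∈ Finset.range (m + 1),
        PowerSeries.coeff (R := Bzy) (m - k) (substZY (bracket P k))) =
      ∑ j ∈ Finset.range (m + 1),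
        cB ((j.factorial : ℂ)⁻¹) * (yB - Polynomial.X) ^ j * embZ (aCoef P j (m - j)) := by
  rw [← Finset.sum_range_reflect
    (fun k => PowerSeries.coeff (R := Bzy) (m - k) (substZY (bracket P k))) (m + 1)]
  refine Finset.sum_congr rfl fun j hj => ?_
  have hjm : j ≤ m := Nat.lt_succ_iff.mp (Finset.mem_range.mp hj)
  simp only [Nat.add_sub_cancel]
  rw [Nat.sub_sub_self hjm, coeff_substZY, aCoef_eq]
/-- The `m`-th coefficient of `B(z,u) = Σ_k q^k bracket_k(z,u)`. -/
def Tser (P : ℕ → Bzy) (m : ℕ) : Bzy :=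
  ∑ k ∈ Finset.range (m + 1), PowerSeries.coeff (R := Bzy) (m - k) (substZY (bracket P k))

lemma series_eq (ρ : ℝ) (P : ℕ → Bzy) (hF : FuncEq ρ P) :
    PowerSeries.mk (fun k => P k) =
      (PowerSeries.C (R := Bzy) (1 + cB (ρ : ℂ) * (Polynomial.X - 1)) +
          PowerSeries.X * PowerSeries.C (R := Bzy) (cB (ρ : ℂ) * (yB - Polynomial.X))) *
        PowerSeries.mk (Tser P) := by
  have hfac : constHom (1 - (ρ : ℂ)) + constHom (ρ : ℂ) * useries =
      PowerSeries.C (R := Bzy) (1 + cB (ρ : ℂ) * (Polynomial.X - 1)) +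
        PowerSeries.X * PowerSeries.C (R := Bzy) (cB (ρ : ℂ) * (yB - Polynomial.X)) := by
    rw [constHom_eq, constHom_eq, useries]
    have h1 : cB (1 - (ρ : ℂ)) = 1 - cB (ρ : ℂ) := by simp [cB]
    simp only [h1, map_sub, map_one, map_add, map_mul]
    ring
  have hsum : (PowerSeries.C (R := Bzy) (Polynomial.X - 1) *
        PowerSeries.mk (fun m => ∑ k ∈ Finset.range (m + 1),
          PowerSeries.coeff (R := Bzy) (m - k) (substY ((P k).coeff 0))) +
      PowerSeries.mk (fun m => ∑ k ∈ Finset.range (m + 1),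
        PowerSeries.coeff (R := Bzy) (m - k) (substZY (P k)))) =
      PowerSeries.C (R := Bzy) Polynomial.X * PowerSeries.mk (Tser P) := by
    apply PowerSeries.ext
    intro m
    rw [map_add, PowerSeries.coeff_C_mul, PowerSeries.coeff_C_mul, PowerSeries.coeff_mk,
      PowerSeries.coeff_mk, PowerSeries.coeff_mk, Tser, Finset.mul_sum, Finset.mul_sum,
      ← Finset.sum_add_distrib]
    refine Finset.sum_congr rfl fun k _ => ?_
    rw [← PowerSeries.coeff_C_mul, ← PowerSeries.coeff_C_mul, CX_mul_substZY_bracket,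
      map_add, PowerSeries.coeff_C_mul]
  rw [FuncEq, hfac, hsum] at hF
  have key : ∀ f g : PowerSeries Bzy,
      PowerSeries.C (R := Bzy) Polynomial.X * f = PowerSeries.C (R := Bzy) Polynomial.X * g → f = g := by
    intro f g h
    apply PowerSeries.ext
    intro m
    have h2 := congrArg (PowerSeries.coeff (R := Bzy) m) h
    rw [PowerSeries.coeff_C_mul, PowerSeries.coeff_C_mul] at h2
    exact mul_left_cancel₀ Polynomial.X_ne_zero h2
  apply key
  rw [hF, mul_left_comm]

lemma step (ρ : ℝ) (P : ℕ → Bzy) (hF : FuncEq ρ P) (n : ℕ) :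
    P (n + 1) = (1 + cB (ρ : ℂ) * (Polynomial.X - 1)) * Tser P (n + 1) +
      cB (ρ : ℂ) * (yB - Polynomial.X) * Tser P n := by
  have h := congrArg (PowerSeries.coeff (R := Bzy) (n + 1)) (series_eq ρ P hF)
  rw [PowerSeries.coeff_mk, add_mul, map_add, PowerSeries.coeff_C_mul, PowerSeries.coeff_mk,
    mul_assoc, PowerSeries.coeff_succ_X_mul, PowerSeries.coeff_C_mul, PowerSeries.coeff_mk] at h
  exact h

/-- Taylor form of `Tser`. -/
lemma Tser_eq (P : ℕ → Bzy) (m : ℕ) :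
    Tser P m = ∑ j ∈ Finset.range (m + 1),
      cB ((j.factorial : ℂ)⁻¹) * (yB - Polynomial.X) ^ j * embZ (aCoef P j (m - j)) :=
  Tsum P m
lemma evalD_Cp (r : Polynomial ℂ) : evalD (Polynomial.C r) = r := by simp [evalD]

lemma evalD_Tser (P : ℕ → Bzy) (m : ℕ) : evalD (Tser P m) = aCoef P 0 m := by
  rw [Tser_eq, map_sum]
  rw [Finset.sum_eq_single_of_mem 0 (Finset.mem_range.mpr (Nat.succ_pos m))]
  · simp [map_mul, map_pow, map_sub, evalD_yB, evalD_X, evalD_cB, evalD_embZ]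
  · intro j _ hj
    rw [map_mul, map_mul, map_pow, map_sub, evalD_yB, evalD_X, sub_self, zero_pow hj,
      mul_zero, zero_mul]

lemma a0_eq (ρ : ℝ) (hρ : ρ ∈ Set.Ioo (0 : ℝ) 1) (P : ℕ → Bzy) (hF : FuncEq ρ P) (n : ℕ) :
    aCoef P 0 (n + 1) = Polynomial.C ((1 - (ρ : ℂ))⁻¹) * (P (n + 1)).coeff 0 := by
  have hρ0 : (ρ : ℂ) ≠ 0 := Complex.ofReal_ne_zero.mpr (ne_of_gt hρ.1)
  have hρ1 : (1 : ℂ) - (ρ : ℂ) ≠ 0 := by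
    have : ((1 - ρ : ℝ) : ℂ) ≠ 0 := Complex.ofReal_ne_zero.mpr (ne_of_gt (sub_pos.mpr hρ.2))
    simpa using this
  have hQ : evalD (P (n + 1)) =
      (1 + Polynomial.C (ρ : ℂ) * (Polynomial.X - 1)) * aCoef P 0 (n + 1) := by
    have h := congrArg evalD (step ρ P hF n)
    rw [map_add, map_mul, map_mul, evalD_Tser, evalD_Tser] at h
    have hW : evalD (1 + cB (ρ : ℂ) * (Polynomial.X - 1)) =
        1 + Polynomial.C (ρ : ℂ) * (Polynomial.X - 1) := by
      rw [map_add, map_one, map_mul, map_sub, map_one, evalD_cB, evalD_X]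
    have hz : evalD (cB (ρ : ℂ) * (yB - Polynomial.X)) = 0 := by
      rw [map_mul, map_sub, evalD_yB, evalD_X, sub_self, mul_zero]
    rw [hW, hz, zero_mul, add_zero] at h
    exact h
  have hA0 : aCoef P 0 (n + 1) = (P (n + 1)).coeff 0 +
      evalD ((P (n + 1) - Polynomial.C ((P (n + 1)).coeff 0)) /ₘ Polynomial.X) := by
    have h0 : aCoef P 0 (n + 1) = evalD (bracket P (n + 1)) := by
      rw [aCoef_eq]; simp
    rw [h0, bracket, map_add, evalD_Cp]
  have hXD : Polynomial.X *
        evalD ((P (n + 1) - Polynomial.C ((P (n + 1)).coeff 0)) /ₘ Polynomial.X) =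
      evalD (P (n + 1)) - (P (n + 1)).coeff 0 := by
    have h := congrArg evalD (X_mul_divX (P (n + 1)))
    rw [map_mul, evalD_X, map_sub, evalD_Cp] at h
    exact h
  set Q := evalD (P (n + 1)) with hQdef
  set R := ((P (n + 1)).coeff 0 : Polynomial ℂ) with hRdef
  set D := evalD ((P (n + 1) - Polynomial.C ((P (n + 1)).coeff 0)) /ₘ Polynomial.X) with hDdef
  have hQ2 : Q = (1 + Polynomial.C (ρ : ℂ) * (Polynomial.X - 1)) * (R + D) := by
    rw [hQ, hA0]
  have hX1 : (Polynomial.X - 1 : Polynomial ℂ) ≠ 0 := by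
    intro h
    have h2 := congrArg (fun p => Polynomial.coeff p 1) h
    simp [Polynomial.coeff_sub, Polynomial.coeff_one] at h2
  have hW0 : (1 + Polynomial.C (ρ : ℂ) * (Polynomial.X - 1) : Polynomial ℂ) ≠ 0 := by
    intro h
    have h2 := congrArg (fun p => Polynomial.coeff p 1) h
    simp [mul_sub, Polynomial.coeff_sub, Polynomial.coeff_one, Polynomial.coeff_C_mul,
      Polynomial.coeff_C] at h2
    exact ne_of_gt hρ.1 h2
  have h3 : (Polynomial.X - 1) *
      ((1 - Polynomial.C (ρ : ℂ)) * Q -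
        (1 + Polynomial.C (ρ : ℂ) * (Polynomial.X - 1)) * R) = 0 := by
    linear_combination (Polynomial.X : Polynomial ℂ) * hQ2 +
      (1 + Polynomial.C (ρ : ℂ) * (Polynomial.X - 1)) * hXD
  have h4 : (1 - Polynomial.C (ρ : ℂ)) * Q =
      (1 + Polynomial.C (ρ : ℂ) * (Polynomial.X - 1)) * R := by
    exact sub_eq_zero.mp ((mul_eq_zero.mp h3).resolve_left hX1)
  have h5 : (1 + Polynomial.C (ρ : ℂ) * (Polynomial.X - 1)) *
      ((1 - Polynomial.C (ρ : ℂ)) * aCoef P 0 (n + 1) - R) = 0 := by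
    linear_combination h4 - (1 - Polynomial.C (ρ : ℂ)) * hQ
  have h6 : (1 - Polynomial.C (ρ : ℂ)) * aCoef P 0 (n + 1) = R :=
    sub_eq_zero.mp ((mul_eq_zero.mp h5).resolve_left hW0)
  have h7 : Polynomial.C (1 - (ρ : ℂ)) * aCoef P 0 (n + 1) = R := by
    rw [map_sub, map_one]; exact h6
  calc aCoef P 0 (n + 1)
      = Polynomial.C ((1 - (ρ : ℂ))⁻¹) * (Polynomial.C (1 - (ρ : ℂ)) * aCoef P 0 (n + 1)) := by
        rw [← mul_assoc, ← map_mul, inv_mul_cancel₀ hρ1, map_one, one_mul]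
    _ = Polynomial.C ((1 - (ρ : ℂ))⁻¹) * R := by rw [h7]

end Stmt5Aux
end

open Stmt5Aux in
theorem stmt5 (ρ : ℝ) (hρ : ρ ∈ Set.Ioo (0 : ℝ) 1) (P : ℕ → Bzy)
    (hF : FuncEq ρ P) (hI : IndepY P) (hB : Boundary ρ P) :
    ∀ k : ℕ, 1 ≤ k →
      P k = (∑ j ∈ Finset.Icc 1 k,
          cB ((j.factorial : ℂ)⁻¹) * (yB - Polynomial.X) ^ j *
            ((j : Bzy) * cB (ρ : ℂ) * embZ (aCoef P (j - 1) (k - j)) +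
              (1 + cB (ρ : ℂ) * (Polynomial.X - 1)) * embZ (aCoef P j (k - j)))) +
        (1 + cB (ρ : ℂ) * (Polynomial.X - 1)) * cB ((1 - (ρ : ℂ))⁻¹) * embZ ((P k).coeff 0) := by
  intro k hk
  obtain ⟨n, rfl⟩ : ∃ n, k = n + 1 := ⟨k - 1, (Nat.succ_pred_eq_of_pos hk).symm⟩
  have key : (1 + cB (ρ : ℂ) * (Polynomial.X - 1)) *
        (∑ i ∈ Finset.range (n + 1),
          cB (((i + 1).factorial : ℂ)⁻¹) * (yB - Polynomial.X) ^ (i + 1) *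
            embZ (aCoef P (i + 1) (n + 1 - (i + 1)))) +
      cB (ρ : ℂ) * (yB - Polynomial.X) *
        (∑ i ∈ Finset.range (n + 1),
          cB ((i.factorial : ℂ)⁻¹) * (yB - Polynomial.X) ^ i * embZ (aCoef P i (n - i))) =
      ∑ i ∈ Finset.range (n + 1),
        cB (((1 + i).factorial : ℂ)⁻¹) * (yB - Polynomial.X) ^ (1 + i) *
          (((1 + i : ℕ) : Bzy) * cB (ρ : ℂ) * embZ (aCoef P (1 + i - 1) (n + 1 - (1 + i))) +
            (1 + cB (ρ : ℂ) * (Polynomial.X - 1)) * embZ (aCoef P (1 + i) (n + 1 - (1 + i)))) := by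
    rw [Finset.mul_sum, Finset.mul_sum, ← Finset.sum_add_distrib]
    refine Finset.sum_congr rfl fun i hi => ?_
    have e1 : n + 1 - (i + 1) = n - i := by omega
    have e2 : 1 + i - 1 = i := by omega
    have e3 : n + 1 - (1 + i) = n - i := by omega
    have e4 : 1 + i = i + 1 := Nat.add_comm 1 i
    rw [e1, e2, e3, e4]
    have hs : cB ((i.factorial : ℂ)⁻¹) =
        ((i + 1 : ℕ) : Bzy) * cB ((((i + 1).factorial : ℕ) : ℂ)⁻¹) := by
      rw [← cB_natCast, cB_mul]
      congr 1
      have h1 : ((i.factorial : ℕ) : ℂ) ≠ 0 := Nat.cast_ne_zero.mpr i.factorial_ne_zero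
      have h2 : (((i + 1 : ℕ) : ℕ) : ℂ) ≠ 0 := Nat.cast_ne_zero.mpr (Nat.succ_ne_zero i)
      rw [Nat.factorial_succ, Nat.cast_mul, mul_inv, ← mul_assoc, mul_inv_cancel₀ h2, one_mul]
    rw [hs]
    ring
  have h0 : aCoef P 0 (n + 1) = Polynomial.C ((1 - (ρ : ℂ))⁻¹) * (P (n + 1)).coeff 0 :=
    a0_eq ρ hρ P hF n
  have cB_one : cB 1 = 1 := by simp [cB]
  conv_lhs => rw [step ρ P hF n, Tser_eq, Tser_eq, Finset.sum_range_succ' _ (n + 1)]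
  conv_rhs => rw [← Finset.Ico_add_one_right_eq_Icc, Finset.sum_Ico_eq_sum_range]
  simp only [Nat.succ_sub_one, Nat.add_sub_cancel, Nat.sub_zero, pow_zero, Nat.factorial_zero, Nat.cast_one,
    inv_one, mul_one, one_mul, h0, map_mul, embZ_C, cB_one]
  linear_combination key
end

section
/- Under the assumptions on F, for every k ≥ 0 the identity (1−ρ)·a_0^k(z) = P^(k)(0,z) holds as polynomials in z; equivalently, P^(k)(0,z) + (P^(k)(z,z) − P^(k)(0,z))/z = P^(k)(0,z)/(1−ρ). -/
open scoped BigOperators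

namespace AuxStmt6

open Polynomial PowerSeries

noncomputable def sig : _root_.Bzy →+* Polynomial ℂ :=
  Polynomial.eval₂RingHom (RingHom.id (Polynomial ℂ)) Polynomial.X

lemma sig_apply (p : _root_.Bzy) :
    sig p = Polynomial.eval₂ (RingHom.id (Polynomial ℂ)) Polynomial.X p := rfl

lemma sig_C (a : Polynomial ℂ) : sig (Polynomial.C a) = a := by
  simp [sig_apply]

lemma sig_X : sig Polynomial.X = Polynomial.X := by simp [sig_apply]

lemma map_useries : PowerSeries.map sig _root_.useries = PowerSeries.C Polynomial.X := by
  simp [useries, yB, map_add, map_mul, PowerSeries.map_C, PowerSeries.map_X, sig_C, sig_X,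
    map_sub]

lemma map_constHom (c : ℂ) :
    PowerSeries.map sig (_root_.constHom c) =
      PowerSeries.C (Polynomial.C c) := by
  simp [constHom, PowerSeries.map_C, sig_C]

lemma map_substY (p : Polynomial ℂ) :
    PowerSeries.map sig (_root_.substY p) = PowerSeries.C p := by
  rw [substY, Polynomial.coe_eval₂RingHom, Polynomial.hom_eval₂, map_useries]
  have hcomp : (PowerSeries.map sig).comp _root_.constHom =
      (PowerSeries.C (R := Polynomial ℂ)).comp (Polynomial.C : ℂ →+* Polynomial ℂ) :=
    RingHom.ext fun c => map_constHom c
  rw [hcomp]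
  have := Polynomial.hom_eval₂ p (Polynomial.C : ℂ →+* Polynomial ℂ)
    (PowerSeries.C (R := Polynomial ℂ)) Polynomial.X
  rw [← this, Polynomial.eval₂_C_X]

lemma map_substZY (Q : _root_.Bzy) :
    PowerSeries.map sig (_root_.substZY Q) = PowerSeries.C (sig Q) := by
  rw [substZY, Polynomial.coe_eval₂RingHom, Polynomial.hom_eval₂, PowerSeries.map_C]
  have hcomp : (PowerSeries.map sig).comp _root_.substY =
      PowerSeries.C (R := Polynomial ℂ) :=
    RingHom.ext fun p => map_substY p
  rw [hcomp, sig_X]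
  have := Polynomial.hom_eval₂ Q (RingHom.id (Polynomial ℂ))
    (PowerSeries.C (R := Polynomial ℂ)) Polynomial.X
  rw [RingHom.comp_id] at this
  rw [← this, sig_apply]

end AuxStmt6

namespace AuxStmt6

lemma mk1 (P : ℕ → _root_.Bzy) :
    (PowerSeries.mk fun m => sig (∑ k ∈ Finset.range (m + 1),
        PowerSeries.coeff (R := _root_.Bzy) (m - k) (_root_.substY ((P k).coeff 0)))) =
      PowerSeries.mk fun m => (P m).coeff 0 := by
  ext n
  rw [PowerSeries.coeff_mk, PowerSeries.coeff_mk, map_sum]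
  have hterm : ∀ k, sig (PowerSeries.coeff (R := _root_.Bzy) (n - k) (_root_.substY ((P k).coeff 0))) =
      if n - k = 0 then (P k).coeff 0 else 0 := by
    intro k
    rw [← PowerSeries.coeff_map, map_substY, PowerSeries.coeff_C]
  rw [Finset.sum_congr rfl fun k _ => hterm k]
  rw [Finset.sum_eq_single_of_mem n (Finset.self_mem_range_succ n)]
  · simp
  · intro k hk hkn
    rw [Finset.mem_range] at hk
    rw [if_neg]
    omega

lemma mk2 (P : ℕ → _root_.Bzy) :
    (PowerSeries.mk fun m => sig (∑ k ∈ Finset.range (m + 1),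
        PowerSeries.coeff (R := _root_.Bzy) (m - k) (_root_.substZY (P k)))) =
      PowerSeries.mk fun m => sig (P m) := by
  ext n
  rw [PowerSeries.coeff_mk, PowerSeries.coeff_mk, map_sum]
  have hterm : ∀ k, sig (PowerSeries.coeff (R := _root_.Bzy) (n - k) (_root_.substZY (P k))) =
      if n - k = 0 then sig (P k) else 0 := by
    intro k
    rw [← PowerSeries.coeff_map, map_substZY, PowerSeries.coeff_C]
  rw [Finset.sum_congr rfl fun k _ => hterm k]
  rw [Finset.sum_eq_single_of_mem n (Finset.self_mem_range_succ n)]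
  · simp
  · intro k hk hkn
    rw [Finset.mem_range] at hk
    rw [if_neg]
    omega

lemma map_mkP (P : ℕ → _root_.Bzy) :
    PowerSeries.map sig (PowerSeries.mk fun k => P k) = PowerSeries.mk fun k => sig (P k) := by
  ext n
  rw [PowerSeries.coeff_map, PowerSeries.coeff_mk, PowerSeries.coeff_mk]

lemma coeff_form (a b : Polynomial ℂ) (f g : ℕ → Polynomial ℂ) (k : ℕ) :
    PowerSeries.coeff (R := Polynomial ℂ) k (PowerSeries.C (R := Polynomial ℂ) a *
        (PowerSeries.C (R := Polynomial ℂ) b * PowerSeries.mk f + PowerSeries.mk g)) =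
      a * (b * f k + g k) := by
  rw [PowerSeries.coeff_C_mul, map_add, PowerSeries.coeff_C_mul, PowerSeries.coeff_mk,
    PowerSeries.coeff_mk]

lemma key (ρ : ℝ) (P : ℕ → _root_.Bzy) (hF : _root_.FuncEq ρ P) (k : ℕ) :
    Polynomial.X * sig (P k) =
      (1 - Polynomial.C (ρ : ℂ) + Polynomial.C (ρ : ℂ) * Polynomial.X) *
        ((Polynomial.X - 1) * (P k).coeff 0 + sig (P k)) := by
  have h := congrArg (PowerSeries.map sig) hF
  simp only [map_mul, map_add, map_sub, map_one, PowerSeries.map_C, map_constHom,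
    map_useries, map_mkP, sig_X] at h
  rw [mk1, mk2] at h
  have hpre : (1 - PowerSeries.C (R := Polynomial ℂ) (Polynomial.C (ρ : ℂ)) +
      PowerSeries.C (R := Polynomial ℂ) (Polynomial.C (ρ : ℂ)) *
        PowerSeries.C (R := Polynomial ℂ) Polynomial.X) =
      PowerSeries.C (R := Polynomial ℂ)
        (1 - Polynomial.C (ρ : ℂ) + Polynomial.C (ρ : ℂ) * Polynomial.X) := by
    simp only [map_add, map_sub, map_one, map_mul]
  have hXm : (PowerSeries.C (R := Polynomial ℂ) Polynomial.X - 1) =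
      PowerSeries.C (R := Polynomial ℂ) (Polynomial.X - 1) := by
    simp only [map_sub, map_one]
  rw [hpre, hXm] at h
  have h2 := congrArg (PowerSeries.coeff (R := Polynomial ℂ) k) h
  rw [coeff_form, PowerSeries.coeff_C_mul, PowerSeries.coeff_mk] at h2
  exact h2

lemma hbr (P : ℕ → _root_.Bzy) (k : ℕ) :
    Polynomial.X * sig (_root_.bracket P k) =
      (Polynomial.X - 1) * (P k).coeff 0 + sig (P k) := by
  have hdiv : (Polynomial.X : _root_.Bzy) *
      ((P k - Polynomial.C ((P k).coeff 0)) /ₘ Polynomial.X) =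
      P k - Polynomial.C ((P k).coeff 0) := by
    have h := Polynomial.modByMonic_add_div (P k - Polynomial.C ((P k).coeff 0))
      Polynomial.X
    rw [Polynomial.modByMonic_X] at h
    have h0 : (P k - Polynomial.C ((P k).coeff 0)).eval 0 = 0 := by
      simp [← Polynomial.coeff_zero_eq_eval_zero]
    rw [h0, map_zero, zero_add] at h
    exact h
  have h2 : sig (Polynomial.X * ((P k - Polynomial.C ((P k).coeff 0)) /ₘ Polynomial.X)) =
      sig (P k) - (P k).coeff 0 := by
    rw [hdiv, map_sub, sig_C]
  rw [map_mul, sig_X] at h2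
  rw [_root_.bracket, map_add, sig_C, mul_add, h2]
  ring

end AuxStmt6

theorem stmt6 (ρ : ℝ) (hρ : ρ ∈ Set.Ioo (0 : ℝ) 1) (P : ℕ → Bzy)
    (hF : FuncEq ρ P) (hI : IndepY P) (hB : Boundary ρ P) :
    ∀ k : ℕ, Polynomial.C (1 - (ρ : ℂ)) * aCoef P 0 k = (P k).coeff 0 := by
  intro k
  have ha : aCoef P 0 k = AuxStmt6.sig (bracket P k) := by
    simp [aCoef, AuxStmt6.sig_apply]
  have E := AuxStmt6.key ρ P hF k
  have hb := AuxStmt6.hbr P k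
  have hX : (Polynomial.X : Polynomial ℂ) ≠ 0 := Polynomial.X_ne_zero
  have h2 : AuxStmt6.sig (P k) =
      (1 - Polynomial.C (ρ : ℂ) + Polynomial.C (ρ : ℂ) * Polynomial.X) *
        AuxStmt6.sig (bracket P k) :=
    mul_left_cancel₀ hX (by rw [E, ← hb]; ring)
  have h3 : (Polynomial.X - 1) * (Polynomial.C (1 - (ρ : ℂ)) * AuxStmt6.sig (bracket P k)) =
      (Polynomial.X - 1) * (P k).coeff 0 := by
    simp only [map_sub, map_one] at h2 ⊢
    linear_combination hb + h2
  have hX1 : (Polynomial.X - 1 : Polynomial ℂ) ≠ 0 := by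
    intro h
    have h' := congrArg (Polynomial.eval 2) h
    norm_num at h'
  have := mul_left_cancel₀ hX1 h3
  rw [ha, this]
end

section
/- Under the assumptions on F, the zeroth-order family satisfies a_j^0(z) = δ_{j,0} for every j ≥ 0; that is, a_0^0(z) is identically 1 and a_j^0(z) is identically 0 for j ≥ 1. -/
open scoped BigOperators

section
open Polynomial PowerSeries

theorem key (ρ : ℝ) (hρ : ρ ∈ Set.Ioo (0 : ℝ) 1) (P : ℕ → Bzy)
    (hF : FuncEq ρ P) (hI : IndepY P) (hB : Boundary ρ P) :
    P 0 = cB (1 - (ρ:ℂ)) + cB (ρ:ℂ) * Polynomial.X := by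
  have hE := congrArg (PowerSeries.constantCoeff (R := Bzy)) hF
  simp only [map_mul, map_add, PowerSeries.constantCoeff_C, PowerSeries.constantCoeff_X,
    PowerSeries.coeff_zero_eq_constantCoeff_apply] at hE
  simp only [PowerSeries.constantCoeff_mk, Finset.sum_range_one, Nat.sub_zero,
    PowerSeries.coeff_zero_eq_constantCoeff_apply] at hE
  have hconst : ∀ c : ℂ, PowerSeries.constantCoeff (R := Bzy) (constHom c) = cB c := fun c => rfl
  have huse : PowerSeries.constantCoeff (R := Bzy) useries = Polynomial.X := by
    simp [useries]
  rw [hconst, hconst, huse] at hE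
  -- compute constantCoeff (substY p)
  have hsY : ∀ p : Polynomial ℂ, PowerSeries.constantCoeff (R := Bzy) (substY p) =
      p.eval₂ ((Polynomial.C).comp (Polynomial.C : ℂ →+* Polynomial ℂ)) Polynomial.X := by
    intro p
    show PowerSeries.constantCoeff (R := Bzy) (p.eval₂ constHom useries) = _
    rw [Polynomial.hom_eval₂, huse]
    rfl
  -- constant coeff of P 0
  obtain ⟨c0, hc0⟩ := hI 0
  have hc0v : c0 = 1 - (ρ:ℂ) := by
    have := hB.1
    rw [hc0] at this
    simpa using this
  have hQ0 : PowerSeries.constantCoeff (R := Bzy) (substY ((P 0).coeff 0)) = cB c0 := by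
    rw [hc0, hsY]; simp [cB]
  have hQz : PowerSeries.constantCoeff (R := Bzy) (substZY (P 0)) = P 0 := by
    show PowerSeries.constantCoeff (R := Bzy) ((P 0).eval₂ substY _) = P 0
    rw [Polynomial.hom_eval₂]
    have hCX : PowerSeries.constantCoeff (R := Bzy) (PowerSeries.C (R := Bzy) Polynomial.X) = Polynomial.X := rfl
    rw [hCX]
    conv_rhs => rw [(P 0).as_sum_support]
    rw [Polynomial.eval₂_eq_sum, Polynomial.sum_def]
    refine Finset.sum_congr rfl fun n _ => ?_
    obtain ⟨c, hc⟩ := hI n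
    rw [hc]
    have : ((PowerSeries.constantCoeff (R := Bzy)).comp substY) (Polynomial.C c) = cB c := by
      show PowerSeries.constantCoeff (R := Bzy) (Polynomial.eval₂ constHom useries (Polynomial.C c)) = _
      rw [Polynomial.eval₂_C]; rfl
    rw [this]
    show Polynomial.C (Polynomial.C c) * _ = _; rw [Polynomial.C_mul_X_pow_eq_monomial]
  simp only [zero_add, Finset.sum_range_one, Nat.sub_zero,
    PowerSeries.coeff_zero_eq_constantCoeff_apply, hQ0, hQz] at hE
  -- now hE : X * P 0 = (cB (1-ρ) + cB ρ * X) * ((X-1) * cB c0 + P 0)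
  have h1 : (1:ℂ) - (ρ:ℂ) ≠ 0 := by
    have : (ρ:ℂ) ≠ 1 := by exact_mod_cast (ne_of_lt hρ.2)
    exact sub_ne_zero.mpr (Ne.symm this)
  have hcB : ∀ c : ℂ, cB c = Polynomial.C (Polynomial.C c) := fun _ => rfl
  have hfac : (cB (1 - (ρ:ℂ)) * (Polynomial.X - 1)) * P 0 =
      ((cB (1 - (ρ:ℂ)) + cB (ρ:ℂ) * Polynomial.X) * (Polynomial.X - 1)) * cB c0 := by
    simp only [hcB, map_sub, map_one] at hE ⊢
    linear_combination hE
  have hX1 : (Polynomial.X - 1 : Bzy) ≠ 0 := by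
    intro h
    have := congrArg (fun p => Polynomial.coeff p 1) h
    simp [Polynomial.coeff_one] at this
  have hfac2 : cB (1 - (ρ:ℂ)) * P 0 =
      (cB (1 - (ρ:ℂ)) + cB (ρ:ℂ) * Polynomial.X) * cB c0 := by
    refine mul_right_cancel₀ hX1 ?_
    linear_combination hfac
  have hcBne : cB ((1:ℂ) - ρ) ≠ 0 := by
    simp only [hcB]
    exact fun h => h1 (by simpa using congrArg (fun p => (Polynomial.coeff p 0).coeff 0) h)
  have := mul_left_cancel₀ hcBne (by
    rw [hfac2, hc0v]
    ring : cB ((1:ℂ) - ρ) * P 0 = cB ((1:ℂ) - ρ) * (cB (1 - (ρ:ℂ)) + cB (ρ:ℂ) * Polynomial.X))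
  exact this

theorem stmt7 (ρ : ℝ) (hρ : ρ ∈ Set.Ioo (0 : ℝ) 1) (P : ℕ → Bzy)
    (hF : FuncEq ρ P) (hI : IndepY P) (hB : Boundary ρ P) :
    ∀ j : ℕ, aCoef P j 0 = if j = 0 then 1 else 0 := by
  have hP0 := key ρ hρ P hF hI hB
  have hcB : ∀ c : ℂ, cB c = Polynomial.C (Polynomial.C c) := fun _ => rfl
  have hco : (P 0).coeff 0 = Polynomial.C ((1:ℂ) - ρ) := by
    rw [hP0]; simp only [hcB]; simp
  have hbr : bracket P 0 = 1 := by
    unfold bracket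
    rw [hco, hP0]
    simp only [hcB]
    rw [show Polynomial.C (Polynomial.C ((1:ℂ) - ρ)) + Polynomial.C (Polynomial.C (ρ:ℂ)) * Polynomial.X
        - Polynomial.C (Polynomial.C ((1:ℂ) - ρ))
        = Polynomial.X * Polynomial.C (Polynomial.C (ρ:ℂ)) from by ring]
    rw [Polynomial.mul_divByMonic_cancel_left _ (Polynomial.monic_X)]
    rw [← Polynomial.C_add, ← Polynomial.C_add]
    norm_num
  have hdy1 : dy (1 : Bzy) = 0 := by
    rw [dy, Polynomial.sum_def]
    refine Finset.sum_eq_zero fun x hx => ?_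
    rcases eq_or_ne x 0 with h | h <;> simp [Polynomial.coeff_one, h]
  intro j
  unfold aCoef
  rw [hbr]
  cases j with
  | zero => simp
  | succ n =>
    have : (dy^[n+1]) (1 : Bzy) = 0 := by
      rw [Function.iterate_succ_apply, hdy1]
      induction n with
      | zero => simp
      | succ m ih => rw [Function.iterate_succ_apply, show dy 0 = 0 from by simp [dy]]; exact ih
    rw [this]
    simp
end
end

section
/- Under the assumptions on F, for every k ≥ 2 the polynomial A_k^k(z) is identically zero; consequently, in the recursion for P^(k)(z,y) with k ≥ 2 the summation index effectively runs only from 1 to k−1. -/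
open scoped BigOperators

noncomputable section

section Aux

lemma dy_eq_zero (p : Bzy) (h : ∀ n, ∃ c : ℂ, p.coeff n = Polynomial.C c) : dy p = 0 := by
  unfold dy Polynomial.sum
  apply Finset.sum_eq_zero
  intro n _
  obtain ⟨c, hc⟩ := h n
  simp [hc]

lemma dy_zero' : dy 0 = 0 := by simp [dy]

lemma bracket_zero_const (P : ℕ → Bzy) (hI : IndepY P) :
    ∀ n, ∃ c : ℂ, (bracket P 0).coeff n = Polynomial.C c := by
  intro n
  set q : Bzy := P 0 - Polynomial.C ((P 0).coeff 0) with hq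
  have hq0 : q.coeff 0 = 0 := by simp [hq]
  have hqX : q = Polynomial.X * q.divX := by
    conv_lhs => rw [← Polynomial.X_mul_divX_add q]
    rw [hq0]; simp
  have hdiv : q /ₘ Polynomial.X = q.divX := by
    conv_lhs => rw [hqX]
    exact Polynomial.mul_divByMonic_cancel_left _ Polynomial.monic_X
  have hbr : (bracket P 0).coeff n
      = (Polynomial.C ((P 0).coeff 0)).coeff n + q.coeff (n + 1) := by
    show (Polynomial.C ((P 0).coeff 0) + q /ₘ Polynomial.X).coeff n = _
    rw [Polynomial.coeff_add, hdiv, Polynomial.coeff_divX]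
  rw [hbr]
  have h1 : q.coeff (n + 1) = (P 0).coeff (n + 1) := by
    simp [hq]
  rcases hI (n + 1) with ⟨c1, hc1⟩
  rcases n with _ | m
  · rcases hI 0 with ⟨c0, hc0⟩
    exact ⟨c0 + c1, by simp [h1, hc0, hc1]⟩
  · exact ⟨c1, by simp [h1, hc1]⟩

lemma dy_iter_zero (m : ℕ) : (dy^[m]) 0 = 0 := by
  induction m with
  | zero => rfl
  | succ m ih => rw [Function.iterate_succ_apply, dy_zero', ih]

lemma aCoef_zero (P : ℕ → Bzy) (hI : IndepY P) (j : ℕ) (hj : 1 ≤ j) :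
    aCoef P j 0 = 0 := by
  obtain ⟨m, rfl⟩ : ∃ m, j = m + 1 := ⟨j - 1, by omega⟩
  unfold aCoef
  rw [Function.iterate_succ_apply, dy_eq_zero _ (bracket_zero_const P hI), dy_iter_zero]
  simp

end Aux

end

theorem stmt8 (ρ : ℝ) (hρ : ρ ∈ Set.Ioo (0 : ℝ) 1) (P : ℕ → Bzy)
    (hF : FuncEq ρ P) (hI : IndepY P) (hB : Boundary ρ P) :
    ∀ k : ℕ, 2 ≤ k → Acoef ρ P k k = 0 ∧
      (∑ j ∈ Finset.Icc 1 k,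
          cB ((j.factorial : ℂ)⁻¹) * (yB - Polynomial.X) ^ j *
            ((j : Bzy) * cB (ρ : ℂ) * embZ (aCoef P (j - 1) (k - j)) +
              (1 + cB (ρ : ℂ) * (Polynomial.X - 1)) * embZ (aCoef P j (k - j)))) =
        ∑ j ∈ Finset.Icc 1 (k - 1),
          cB ((j.factorial : ℂ)⁻¹) * (yB - Polynomial.X) ^ j *
            ((j : Bzy) * cB (ρ : ℂ) * embZ (aCoef P (j - 1) (k - j)) +
              (1 + cB (ρ : ℂ) * (Polynomial.X - 1)) * embZ (aCoef P j (k - j))) := by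
  intro k hk
  have hA : Acoef ρ P k k = 0 := by
    unfold Acoef
    rw [if_pos ⟨by omega, le_refl k⟩]
    have h1 : aCoef P (k - 1) (k - k) = 0 := by
      rw [Nat.sub_self]; exact aCoef_zero P hI (k - 1) (by omega)
    have h2 : aCoef P k (k - k) = 0 := by
      rw [Nat.sub_self]; exact aCoef_zero P hI k (by omega)
    rw [h1, h2]; ring
  refine ⟨hA, ?_⟩
  have hIcc : Finset.Icc 1 k = insert k (Finset.Icc 1 (k - 1)) := by
    ext x; simp only [Finset.mem_Icc, Finset.mem_insert]; omega
  rw [hIcc, Finset.sum_insert (by simp only [Finset.mem_Icc]; omega)]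
  have h1 : aCoef P (k - 1) (k - k) = 0 := by
    rw [Nat.sub_self]; exact aCoef_zero P hI (k - 1) (by omega)
  have h2 : aCoef P k (k - k) = 0 := by
    rw [Nat.sub_self]; exact aCoef_zero P hI k (by omega)
  rw [h1, h2]
  simp
end

section
/- Under the assumptions on F, for every k ≥ 1 the boundary coefficient satisfies P^(k)(0,z) = Σ_{j=1}^{k} ((z^j − 1)/j!)·A_j^k(0), as an identity of polynomials in z. -/
open scoped BigOperators

noncomputable section

lemma dy_monomial (n : ℕ) (a : Polynomial ℂ) :
    dy (Polynomial.monomial n a) = Polynomial.monomial n (Polynomial.derivative a) := by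
  unfold dy
  rw [Polynomial.sum_monomial_index]
  · rw [Polynomial.C_mul_X_pow_eq_monomial]
  · simp

lemma dy_add (p q : Bzy) : dy (p + q) = dy p + dy q := by
  unfold dy
  apply Polynomial.sum_add_index <;> simp [add_mul]

lemma dy_iter_monomial (j n : ℕ) (a : Polynomial ℂ) :
    (dy^[j]) (Polynomial.monomial n a) = Polynomial.monomial n ((Polynomial.derivative^[j]) a) := by
  induction j with
  | zero => simp
  | succ j ih =>
    rw [Function.iterate_succ_apply', Function.iterate_succ_apply', ih, dy_monomial]

lemma dy_iter_add (j : ℕ) (p q : Bzy) : (dy^[j]) (p + q) = (dy^[j]) p + (dy^[j]) q := by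
  induction j generalizing p q with
  | zero => simp
  | succ j ih =>
    rw [Function.iterate_succ_apply, Function.iterate_succ_apply dy j p,
      Function.iterate_succ_apply dy j q, dy_add, ih]

lemma coeff_useries_pow (m j : ℕ) :
    PowerSeries.coeff (R := Bzy) j (useries ^ m) =
      (m.choose j : Bzy) * ((yB - Polynomial.X) ^ j * Polynomial.X ^ (m - j)) := by
  induction m generalizing j with
  | zero =>
    cases j with
    | zero => simp
    | succ s => simp [Nat.choose_eq_zero_of_lt (Nat.succ_pos s)]
  | succ m ih =>
    have hsplit : useries ^ (m+1) = PowerSeries.C (R := Bzy) Polynomial.X * useries ^ m +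
        PowerSeries.X * (PowerSeries.C (R := Bzy) (yB - Polynomial.X) * useries ^ m) := by
      rw [pow_succ, mul_comm (useries ^ m)]
      nth_rewrite 1 [useries]
      ring
    rw [hsplit, map_add, PowerSeries.coeff_C_mul]
    cases j with
    | zero =>
      rw [PowerSeries.coeff_zero_X_mul, ih]
      simp [pow_succ, mul_comm]
    | succ s =>
      rw [PowerSeries.coeff_succ_X_mul, PowerSeries.coeff_C_mul, ih, ih]
      rcases le_or_gt (s + 1) m with h | h
      · have h1 : m - s = m - (s + 1) + 1 := by omega
        have h2 : m + 1 - (s + 1) = m - (s+1) + 1 := by omega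
        rw [h1, h2, Nat.choose_succ_succ m s]
        push_cast
        ring
      · have h1 : m.choose (s+1) = 0 := Nat.choose_eq_zero_of_lt h
        have h2 : (m+1).choose (s+1) = m.choose s := by
          rw [Nat.choose_succ_succ m s, h1, Nat.add_zero]
        have h3 : m - s = 0 := by omega
        have h4 : m + 1 - (s + 1) = 0 := by omega
        rw [h1, h2, h3, h4]
        push_cast
        ring

lemma cB_eq (c : ℂ) : constHom c = PowerSeries.C (R := Bzy) (cB c) := rfl

def cBHom : ℂ →+* Bzy :=
  (Polynomial.C : Polynomial ℂ →+* Bzy).comp (Polynomial.C : ℂ →+* Polynomial ℂ)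

lemma cB_hom_eq (c : ℂ) : cB c = cBHom c := rfl

lemma embZ_X : embZ Polynomial.X = Polynomial.X := Polynomial.map_X _

lemma deriv_iter_add (j : ℕ) (p q : Polynomial ℂ) :
    (Polynomial.derivative^[j]) (p + q) =
      (Polynomial.derivative^[j]) p + (Polynomial.derivative^[j]) q := by
  induction j generalizing p q with
  | zero => simp
  | succ j ih =>
    rw [Function.iterate_succ_apply, Function.iterate_succ_apply Polynomial.derivative j p,
      Function.iterate_succ_apply Polynomial.derivative j q, Polynomial.derivative_add, ih]

lemma coeff_substY (j : ℕ) (a : Polynomial ℂ) :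
    PowerSeries.coeff (R := Bzy) j (substY a) =
      cB ((j.factorial : ℂ)⁻¹) *
        ((yB - Polynomial.X) ^ j * embZ ((Polynomial.derivative^[j]) a)) := by
  induction a using Polynomial.induction_on' with
  | add p q hp hq =>
    rw [map_add, map_add, deriv_iter_add, map_add, mul_add, mul_add, hp, hq]
  | monomial m c =>
    rw [substY, Polynomial.coe_eval₂RingHom, Polynomial.eval₂_monomial, cB_eq,
      PowerSeries.coeff_C_mul, coeff_useries_pow]
    rw [show (Polynomial.monomial m c : Polynomial ℂ) = Polynomial.C c * Polynomial.X ^ m from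
      (Polynomial.C_mul_X_pow_eq_monomial).symm]
    rw [Polynomial.iterate_derivative_C_mul, Polynomial.iterate_derivative_X_pow_eq_natCast_mul,
      map_mul, map_mul, map_natCast, map_pow, embZ_X]
    have hembC : embZ (Polynomial.C c) = cB c := by
      simp [embZ, cB]
    rw [hembC]
    have hsc : cBHom ((j.factorial : ℂ)⁻¹) * cBHom ((m.descFactorial j : ℂ)) =
        cBHom ((m.choose j : ℂ)) := by
      rw [← map_mul]
      congr 1
      rw [Nat.descFactorial_eq_factorial_mul_choose]
      push_cast
      have : (j.factorial : ℂ) ≠ 0 := Nat.cast_ne_zero.2 j.factorial_ne_zero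
      field_simp
    have hnat : ∀ n : ℕ, ((n : Bzy)) = cBHom ((n : ℂ)) := by
      intro n; rw [map_natCast cBHom n]
    simp only [hnat, cB_hom_eq]
    linear_combination (-((yB - Polynomial.X) ^ j * Polynomial.X ^ (m - j) * cBHom c)) * hsc

def diag : Bzy →+* Polynomial ℂ :=
  Polynomial.eval₂RingHom (RingHom.id (Polynomial ℂ)) Polynomial.X

lemma coeff_substZY (j : ℕ) (p : Bzy) :
    PowerSeries.coeff (R := Bzy) j (substZY p) =
      cB ((j.factorial : ℂ)⁻¹) *
        ((yB - Polynomial.X) ^ j * embZ (diag ((dy^[j]) p))) := by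
  induction p using Polynomial.induction_on' with
  | add p q hp hq =>
    rw [map_add, map_add, dy_iter_add, map_add, map_add, mul_add, mul_add, hp, hq]
  | monomial n a =>
    rw [substZY, Polynomial.coe_eval₂RingHom, Polynomial.eval₂_monomial, ← map_pow,
      PowerSeries.coeff_mul_C, coeff_substY, dy_iter_monomial, diag,
      Polynomial.coe_eval₂RingHom, Polynomial.eval₂_monomial, RingHom.id_apply, map_mul,
      map_pow, embZ_X]
    ring

lemma substZY_C (a : Polynomial ℂ) : substZY (Polynomial.C a) = substY a := by
  rw [substZY, Polynomial.coe_eval₂RingHom, Polynomial.eval₂_C]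

lemma key_bracket (P : ℕ → Bzy) (k : ℕ) :
    PowerSeries.C (R := Bzy) (Polynomial.X - 1) * substY ((P k).coeff 0) + substZY (P k) =
      PowerSeries.C (R := Bzy) Polynomial.X * substZY (bracket P k) := by
  set c := (P k).coeff 0 with hc
  set Q := (P k - Polynomial.C c) /ₘ Polynomial.X with hQ
  have hdecomp : P k = Polynomial.C c + Polynomial.X * Q := by
    have h := Polynomial.modByMonic_add_div (P k - Polynomial.C c) Polynomial.X
    rw [Polynomial.modByMonic_X] at h
    have he : (P k - Polynomial.C c).eval 0 = 0 := by
      rw [Polynomial.eval_sub, Polynomial.eval_C, ← Polynomial.coeff_zero_eq_eval_zero, hc,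
        sub_self]
    rw [he, map_zero, zero_add, ← hQ] at h
    linear_combination -h
  have h1 : substZY (P k) = substY c + PowerSeries.C (R := Bzy) Polynomial.X * substZY Q := by
    rw [hdecomp, map_add, map_mul, substZY_C]
    congr 2
    rw [substZY, Polynomial.coe_eval₂RingHom, Polynomial.eval₂_X]
  have h2 : substZY (bracket P k) = substY c + substZY Q := by
    rw [bracket, map_add, substZY_C, ← hc, ← hQ]
  rw [h1, h2, map_sub, map_one]
  ring

set_option maxHeartbeats 1000000 in
lemma main_eq (ρ : ℝ) (P : ℕ → Bzy) (hF : FuncEq ρ P) :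
    PowerSeries.mk (fun k => P k) =
      (constHom (1 - (ρ : ℂ)) + constHom (ρ : ℂ) * useries) *
        PowerSeries.mk (fun m => ∑ k ∈ Finset.range (m + 1),
          PowerSeries.coeff (R := Bzy) (m - k) (substZY (bracket P k))) := by
  replace hF : PowerSeries.C (R := Bzy) Polynomial.X * PowerSeries.mk (fun k => P k) =
    (constHom (1 - (ρ : ℂ)) + constHom (ρ : ℂ) * useries) *
      (PowerSeries.C (R := Bzy) (Polynomial.X - 1) *
          PowerSeries.mk (fun m => ∑ k ∈ Finset.range (m + 1),
            PowerSeries.coeff (R := Bzy) (m - k) (substY ((P k).coeff 0))) +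
        PowerSeries.mk (fun m => ∑ k ∈ Finset.range (m + 1),
          PowerSeries.coeff (R := Bzy) (m - k) (substZY (P k)))) := hF
  have hinner : PowerSeries.C (R := Bzy) (Polynomial.X - 1) *
          PowerSeries.mk (fun m => ∑ k ∈ Finset.range (m + 1),
            PowerSeries.coeff (R := Bzy) (m - k) (substY ((P k).coeff 0))) +
        PowerSeries.mk (fun m => ∑ k ∈ Finset.range (m + 1),
          PowerSeries.coeff (R := Bzy) (m - k) (substZY (P k))) =
      PowerSeries.C (R := Bzy) Polynomial.X *
        PowerSeries.mk (fun m => ∑ k ∈ Finset.range (m + 1),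
          PowerSeries.coeff (R := Bzy) (m - k) (substZY (bracket P k))) := by
    apply PowerSeries.ext
    intro n
    rw [map_add, PowerSeries.coeff_C_mul, PowerSeries.coeff_C_mul, PowerSeries.coeff_mk,
      PowerSeries.coeff_mk, PowerSeries.coeff_mk, Finset.mul_sum, Finset.mul_sum,
      ← Finset.sum_add_distrib]
    apply Finset.sum_congr rfl
    intro k _
    have h := congrArg (PowerSeries.coeff (R := Bzy) (n - k)) (key_bracket P k)
    rw [map_add, PowerSeries.coeff_C_mul, PowerSeries.coeff_C_mul] at h
    exact h
  rw [hinner] at hF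
  have hXne : (PowerSeries.C (R := Bzy) Polynomial.X : PowerSeries Bzy) ≠ 0 := by
    intro h
    have h0 := congrArg (PowerSeries.coeff (R := Bzy) 0) h
    simp only [PowerSeries.coeff_zero_C, map_zero] at h0
    exact Polynomial.X_ne_zero h0
  haveI : IsLeftCancelMulZero (PowerSeries Bzy) :=
    (IsDomain.toIsCancelMulZero (α := PowerSeries Bzy)).toIsLeftCancelMulZero
  exact mul_left_cancel₀ hXne (hF.trans (mul_left_comm _ _ _))

def smallc (P : ℕ → Bzy) (j k : ℕ) : ℂ := ((j.factorial : ℂ))⁻¹ * ((aCoef P j k).eval 0)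

lemma ev0_term (P : ℕ → Bzy) (j k : ℕ) :
    (PowerSeries.coeff (R := Bzy) j (substZY (bracket P k))).eval (0 : Polynomial ℂ) =
      Polynomial.C (smallc P j k) * Polynomial.X ^ j := by
  rw [coeff_substZY]
  have hdiag : diag ((dy^[j]) (bracket P k)) = aCoef P j k := by
    rw [diag, Polynomial.coe_eval₂RingHom, aCoef]
  rw [hdiag]
  rw [Polynomial.eval_mul, Polynomial.eval_mul, Polynomial.eval_pow, Polynomial.eval_sub,
    Polynomial.eval_X]
  have h1 : (cB ((j.factorial : ℂ))⁻¹).eval (0 : Polynomial ℂ) =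
      Polynomial.C ((j.factorial : ℂ))⁻¹ := by
    rw [cB, Polynomial.eval_C]
  have h2 : (yB.eval (0 : Polynomial ℂ)) = Polynomial.X := by
    rw [yB, Polynomial.eval_C]
  have h3 : (embZ (aCoef P j k)).eval (0 : Polynomial ℂ) =
      Polynomial.C ((aCoef P j k).eval 0) := by
    rw [embZ, Polynomial.coe_mapRingHom, Polynomial.eval_map, Polynomial.eval₂_at_zero,
      Polynomial.coeff_zero_eq_eval_zero]
  rw [h1, h2, h3, smallc, map_mul, sub_zero]
  ring

lemma ev0_g (P : ℕ → Bzy) (n : ℕ) :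
    (∑ k ∈ Finset.range (n + 1),
        PowerSeries.coeff (R := Bzy) (n - k) (substZY (bracket P k))).eval (0 : Polynomial ℂ) =
      ∑ j ∈ Finset.range (n + 1), Polynomial.C (smallc P j (n - j)) * Polynomial.X ^ j := by
  rw [Polynomial.eval_finset_sum]
  have h1 : ∀ k ∈ Finset.range (n + 1),
      (PowerSeries.coeff (R := Bzy) (n - k) (substZY (bracket P k))).eval (0 : Polynomial ℂ) =
        (fun j => Polynomial.C (smallc P j (n - j)) * Polynomial.X ^ j) (n - k) := by
    intro k hk
    rw [Finset.mem_range] at hk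
    have : n - (n - k) = k := by omega
    rw [ev0_term]
    dsimp only
    rw [this]
  rw [Finset.sum_congr rfl h1]
  have h2 := Finset.sum_range_reflect
    (fun j => Polynomial.C (smallc P j (n - j)) * Polynomial.X ^ j) (n + 1)
  simp only [Nat.add_sub_cancel] at h2
  exact h2

set_option maxHeartbeats 1000000 in
lemma coeff_P_succ (ρ : ℝ) (P : ℕ → Bzy) (hF : FuncEq ρ P) (m : ℕ) :
    (P (m + 1)).coeff 0 =
      Polynomial.C ((1 - (ρ : ℂ)) * smallc P 0 (m + 1)) +
        ∑ i ∈ Finset.range (m + 1),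
          Polynomial.C ((ρ : ℂ) * smallc P i (m - i) +
            (1 - (ρ : ℂ)) * smallc P (1 + i) (m - i)) * Polynomial.X ^ (1 + i) := by
  have hmk := main_eq ρ P hF
  set A0 : Bzy := cB (1 - (ρ : ℂ)) + cB (ρ : ℂ) * Polynomial.X with hA0
  set B0 : Bzy := cB (ρ : ℂ) * (yB - Polynomial.X) with hB0
  have hAB : constHom (1 - (ρ : ℂ)) + constHom (ρ : ℂ) * useries =
      PowerSeries.C (R := Bzy) A0 + PowerSeries.X * PowerSeries.C (R := Bzy) B0 := by
    rw [hA0, hB0, map_add, map_mul, map_mul, useries, cB_eq, cB_eq]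
    ring
  rw [hAB] at hmk
  have hcoeff := congrArg (PowerSeries.coeff (R := Bzy) (m + 1)) hmk
  rw [PowerSeries.coeff_mk, add_mul, mul_assoc, map_add, PowerSeries.coeff_C_mul,
    PowerSeries.coeff_succ_X_mul, PowerSeries.coeff_C_mul, PowerSeries.coeff_mk,
    PowerSeries.coeff_mk] at hcoeff
  have hev := congrArg (Polynomial.eval (0 : Polynomial ℂ)) hcoeff
  rw [Polynomial.eval_add, Polynomial.eval_mul, Polynomial.eval_mul] at hev
  rw [Polynomial.coeff_zero_eq_eval_zero, hev, ev0_g, ev0_g]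
  have hA0e : A0.eval (0 : Polynomial ℂ) = Polynomial.C (1 - (ρ : ℂ)) := by
    rw [hA0, cB, cB]
    simp
  have hB0e : B0.eval (0 : Polynomial ℂ) = Polynomial.C (ρ : ℂ) * Polynomial.X := by
    rw [hB0, cB, yB]
    simp
  rw [hA0e, hB0e]
  rw [Finset.sum_range_succ'
    (fun j => Polynomial.C (smallc P j (m + 1 - j)) * Polynomial.X ^ j) (m + 1)]
  have hre : ∀ i ∈ Finset.range (m + 1),
      (fun j => Polynomial.C (smallc P j (m + 1 - j)) * Polynomial.X ^ j) (i + 1) =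
        Polynomial.C (smallc P (1 + i) (m - i)) * Polynomial.X ^ (1 + i) := by
    intro i _
    dsimp only
    rw [show m + 1 - (i + 1) = m - i from by omega, show i + 1 = 1 + i from by omega]
  rw [Finset.sum_congr rfl hre]
  rw [pow_zero, mul_one, mul_add, ← map_mul, Finset.mul_sum, Finset.mul_sum,
    add_right_comm, ← Finset.sum_add_distrib]
  have hterm : ∀ i ∈ Finset.range (m + 1),
      Polynomial.C (1 - (ρ : ℂ)) * (Polynomial.C (smallc P (1 + i) (m - i)) *
          Polynomial.X ^ (1 + i)) +
        Polynomial.C (ρ : ℂ) * Polynomial.X *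
          (Polynomial.C (smallc P i (m - i)) * Polynomial.X ^ i) =
      Polynomial.C ((ρ : ℂ) * smallc P i (m - i) +
        (1 - (ρ : ℂ)) * smallc P (1 + i) (m - i)) * Polynomial.X ^ (1 + i) := by
    intro i _
    rw [map_add, map_mul, map_mul, pow_add, pow_one]
    ring
  rw [Finset.sum_congr rfl hterm, Nat.sub_zero, add_comm]


end

theorem stmt9 (ρ : ℝ) (hρ : ρ ∈ Set.Ioo (0 : ℝ) 1) (P : ℕ → Bzy)
    (hF : FuncEq ρ P) (hI : IndepY P) (hB : Boundary ρ P) :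
    ∀ k : ℕ, 1 ≤ k →
      (P k).coeff 0 = ∑ j ∈ Finset.Icc 1 k,
        Polynomial.C ((j.factorial : ℂ)⁻¹ * (Acoef ρ P j k).eval 0) * (Polynomial.X ^ j - 1) := by

  intro k hk
  obtain ⟨m, rfl⟩ : ∃ m, k = m + 1 := ⟨k - 1, by omega⟩
  have hP := coeff_P_succ ρ P hF m
  -- the T-values
  set T : ℕ → ℂ := fun i => (ρ : ℂ) * smallc P i (m - i) +
    (1 - (ρ : ℂ)) * smallc P (1 + i) (m - i) with hT
  -- Acoef values
  have hAc : ∀ i ∈ Finset.range (m + 1),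
      Polynomial.C (((1 + i).factorial : ℂ)⁻¹ * (Acoef ρ P (1 + i) (m + 1)).eval 0) *
          (Polynomial.X ^ (1 + i) - 1) =
        Polynomial.C (T i) * (Polynomial.X ^ (1 + i) - 1) := by
    intro i hi
    rw [Finset.mem_range] at hi
    congr 1
    rw [Acoef, if_pos ⟨by omega, by omega⟩]
    rw [Polynomial.eval_add, Polynomial.eval_mul, Polynomial.eval_mul, Polynomial.eval_mul,
      Polynomial.eval_natCast, Polynomial.eval_C, Polynomial.eval_add, Polynomial.eval_one,
      Polynomial.eval_mul, Polynomial.eval_C, Polynomial.eval_sub, Polynomial.eval_X,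
      Polynomial.eval_one]
    rw [show 1 + i - 1 = i from by omega, show m + 1 - (1 + i) = m - i from by omega]
    rw [hT]
    dsimp only
    rw [smallc, smallc]
    have h1 : ((1 + i).factorial : ℂ) = ((1 : ℂ) + i) * (i.factorial : ℂ) := by
      rw [show 1 + i = i + 1 from by omega, Nat.factorial_succ]
      push_cast
      ring
    have h2 : ((i.factorial : ℂ)) ≠ 0 := Nat.cast_ne_zero.2 i.factorial_ne_zero
    have h4 : ((1 : ℂ) + i) ≠ 0 := by
      have : ((1 : ℂ) + i) = ((1 + i : ℕ) : ℂ) := by push_cast; ring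
      rw [this]
      exact Nat.cast_ne_zero.2 (by omega)
    simp only [h1, mul_inv]
    push_cast
    field_simp
    ring
  -- rewrite goal sum over Icc as a range sum
  rw [show Finset.Icc 1 (m + 1) = Finset.Ico 1 (m + 2) from (Finset.Ico_add_one_right_eq_Icc 1 (m + 1)).symm,
    Finset.sum_Ico_eq_sum_range]
  rw [show m + 2 - 1 = m + 1 from by omega]
  rw [Finset.sum_congr rfl hAc]
  -- boundary condition
  have hb := hB.2 (m + 1) (by omega)
  rw [hP] at hb
  simp only [Polynomial.eval_add, Polynomial.eval_finset_sum, Polynomial.eval_mul,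
    Polynomial.eval_C, Polynomial.eval_pow, Polynomial.eval_X, one_pow, mul_one] at hb
  have hb' : (1 - (ρ : ℂ)) * smallc P 0 (m + 1) = - ∑ i ∈ Finset.range (m + 1), T i := by
    rw [hT]
    dsimp only
    exact eq_neg_of_add_eq_zero_left hb
  rw [hP]
  simp only [mul_sub, mul_one]
  rw [Finset.sum_sub_distrib, ← map_sum (Polynomial.C : ℂ →+* Polynomial ℂ) T
    (Finset.range (m + 1)), hb', map_neg]
  ring
end

section
/- Under the assumptions on F, the coefficients admit the closed general form: for every k ≥ 1, P^(k)(z,y) = Σ_{j=1}^{k} [ ((y−z)^j / j!)·A_j^k(z) + ((1+ρ(z−1))/(1−ρ))·((z^j − 1)/j!)·A_j^k(0) ], as an identity of polynomials in z and y. -/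
open scoped BigOperators

noncomputable section
namespace Stmt10

open Polynomial PowerSeries

/-- The "y − z" element. -/
def wB : Bzy := yB - Polynomial.X

/-- Coefficientwise Hasse derivative in the inner variable. -/
def Hy (i : ℕ) (p : Bzy) : Bzy :=
  ∑ n ∈ Finset.range (p.natDegree + 1),
    Polynomial.C (Polynomial.hasseDeriv i (p.coeff n)) * Polynomial.X ^ n

lemma Hy_coeff (i : ℕ) (p : Bzy) (n : ℕ) :
    (Hy i p).coeff n = Polynomial.hasseDeriv i (p.coeff n) := by
  rw [Hy, Polynomial.finset_sum_coeff]
  simp only [Polynomial.coeff_C_mul, Polynomial.coeff_X_pow, mul_ite, mul_one, mul_zero]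
  rw [Finset.sum_ite_eq (Finset.range (p.natDegree + 1)) n
    (fun m => Polynomial.hasseDeriv i (p.coeff m))]
  split_ifs with h
  · rfl
  · rw [Polynomial.coeff_eq_zero_of_natDegree_lt, map_zero]
    simpa using h

lemma Hy_add (i : ℕ) (p q : Bzy) : Hy i (p + q) = Hy i p + Hy i q := by
  ext n; simp [Hy_coeff]

lemma Hy_zero (i : ℕ) : Hy i 0 = 0 := by ext n; simp [Hy_coeff]

lemma Hy_C (i : ℕ) (a : Polynomial ℂ) :
    Hy i (Polynomial.C a) = Polynomial.C (Polynomial.hasseDeriv i a) := by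
  ext n
  rcases n with _ | n <;> simp [Hy_coeff, Polynomial.coeff_C]

lemma Hy_zero' (p : Bzy) : Hy 0 p = p := by
  ext n; simp [Hy_coeff]

lemma Hy_X_mul (i : ℕ) (p : Bzy) : Hy i (Polynomial.X * p) = Polynomial.X * Hy i p := by
  ext n
  rcases n with _ | n <;>
    simp [Hy_coeff, Polynomial.coeff_X_mul, Polynomial.mul_coeff_zero]

lemma Hy_monomial (i n : ℕ) (a : Polynomial ℂ) :
    Hy i (Polynomial.monomial n a) = Polynomial.monomial n (Polynomial.hasseDeriv i a) := by
  ext m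
  simp only [Hy_coeff, Polynomial.coeff_monomial]
  split_ifs <;> simp

lemma Hy_mul (i : ℕ) (p q : Bzy) :
    Hy i (p * q) = ∑ ij ∈ Finset.HasAntidiagonal.antidiagonal i, Hy ij.1 p * Hy ij.2 q := by
  ext n
  rw [Polynomial.finset_sum_coeff]
  simp only [Hy_coeff, Polynomial.coeff_mul, map_sum, Polynomial.hasseDeriv_mul]
  rw [Finset.sum_comm]

lemma Hy_one (i : ℕ) (hi : 0 < i) : Hy i 1 = 0 := by
  ext n
  rcases n with _ | n <;>
    simp [Hy_coeff, Polynomial.coeff_one, Polynomial.hasseDeriv_apply_one _ hi,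
      apply_ite (Polynomial.hasseDeriv i), Polynomial.hasseDeriv_C _ _ hi]



/-- Diagonal evaluation `y = z`, `Bzy → ℂ[t]`. -/
def diagEval : Bzy →+* Polynomial ℂ :=
  Polynomial.eval₂RingHom (RingHom.id (Polynomial ℂ)) Polynomial.X

lemma diagEval_C (a : Polynomial ℂ) : diagEval (Polynomial.C a) = a :=
  Polynomial.eval₂_C _ _

lemma diagEval_X : diagEval (Polynomial.X : Bzy) = Polynomial.X :=
  Polynomial.eval₂_X _ _

lemma diagEval_embZ (q : Polynomial ℂ) : diagEval (embZ q) = q := by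
  show Polynomial.eval₂ (RingHom.id (Polynomial ℂ)) Polynomial.X (q.map Polynomial.C) = q
  rw [Polynomial.eval₂_map]
  exact Polynomial.eval₂_C_X

lemma diagEval_wB : diagEval wB = 0 := by
  rw [wB, yB, map_sub, diagEval_C, diagEval_X, sub_self]

lemma diagEval_cB (c : ℂ) : diagEval (cB c) = Polynomial.C c := by
  rw [cB, diagEval_C]

lemma embZ_C (c : ℂ) : embZ (Polynomial.C c) = cB c := by
  simp [embZ, cB]

lemma embZ_X : embZ (Polynomial.X : Polynomial ℂ) = Polynomial.X := by
  simp [embZ]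

/-- The Taylor expansion ring hom: `g ↦ g(z + q(y-z))` expanded in powers of `q`. -/
def T : Polynomial ℂ →+* PowerSeries Bzy where
  toFun g := PowerSeries.mk fun i => wB ^ i * embZ (Polynomial.hasseDeriv i g)
  map_one' := by
    refine PowerSeries.ext fun n => ?_
    rcases n with _ | n
    · simp [Polynomial.hasseDeriv_zero]
    · simp [Polynomial.hasseDeriv_apply_one _ (Nat.succ_pos n), PowerSeries.coeff_one]
  map_mul' f g := by
    refine PowerSeries.ext fun n => ?_
    rw [PowerSeries.coeff_mk, PowerSeries.coeff_mul, Polynomial.hasseDeriv_mul,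
      map_sum embZ, Finset.mul_sum]
    refine Finset.sum_congr rfl fun ij hij => ?_
    rw [Finset.HasAntidiagonal.mem_antidiagonal] at hij
    rw [PowerSeries.coeff_mk, PowerSeries.coeff_mk, ← hij, pow_add, map_mul]
    ring
  map_zero' := by
    refine PowerSeries.ext fun n => ?_; simp
  map_add' f g := by
    refine PowerSeries.ext fun n => ?_; simp [map_add, mul_add]

lemma T_apply (g : Polynomial ℂ) :
    T g = PowerSeries.mk fun i => wB ^ i * embZ (Polynomial.hasseDeriv i g) := rfl

lemma T_C (a : ℂ) : T (Polynomial.C a) = constHom a := by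
  refine PowerSeries.ext fun n => ?_
  rcases n with _ | n
  · simp [T, constHom, Polynomial.hasseDeriv_zero, embZ_C, cB]
  · simp [T, constHom, Polynomial.hasseDeriv_C _ _ (Nat.succ_pos n), PowerSeries.coeff_C]

lemma T_X : T Polynomial.X = useries := by
  refine PowerSeries.ext fun n => ?_
  have hX : ∀ m, (PowerSeries.coeff (R := Bzy) m) (PowerSeries.X * PowerSeries.C (R := Bzy) wB) =
      if m = 1 then wB else 0 := by
    intro m
    rw [show (PowerSeries.X : PowerSeries Bzy) * PowerSeries.C (R := Bzy) wB =
        PowerSeries.C (R := Bzy) wB * PowerSeries.X from mul_comm _ _,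
      PowerSeries.coeff_C_mul, PowerSeries.coeff_X]
    split_ifs <;> simp
  rcases n with _ | n
  · simp [T, useries, Polynomial.hasseDeriv_zero, embZ_X, hX]
  · rcases n with _ | n
    · simp [T, useries, wB, yB, Polynomial.hasseDeriv_one', hX]
    · simp [T, useries, Polynomial.hasseDeriv_X _ (by omega : 1 < n + 1 + 1), hX,
        PowerSeries.coeff_C]

lemma substY_eq_T : substY = T := by
  apply Polynomial.ringHom_ext
  · intro a
    rw [T_C]
    show Polynomial.eval₂ constHom useries (Polynomial.C a) = constHom a
    exact Polynomial.eval₂_C _ _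
  · rw [T_X]
    exact Polynomial.eval₂_X _ _

lemma coeff_substY (g : Polynomial ℂ) (i : ℕ) :
    PowerSeries.coeff (R := Bzy) i (substY g) = wB ^ i * embZ (Polynomial.hasseDeriv i g) := by
  rw [substY_eq_T, T_apply]
  exact PowerSeries.coeff_mk _ _

lemma coeff_substZY (p : Bzy) (i : ℕ) :
    PowerSeries.coeff (R := Bzy) i (substZY p) = wB ^ i * embZ (diagEval (Hy i p)) := by
  induction p using Polynomial.induction_on' with
  | add p q hp hq => rw [map_add, map_add, hp, hq, Hy_add, map_add, map_add, mul_add]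
  | monomial n a =>
    have h1 : substZY (Polynomial.monomial n a) =
        substY a * (PowerSeries.C (R := Bzy) Polynomial.X) ^ n :=
      Polynomial.eval₂_monomial _ _
    rw [h1, ← map_pow (PowerSeries.C (R := Bzy)), PowerSeries.coeff_mul_C, coeff_substY, Hy_monomial]
    have h2 : diagEval (Polynomial.monomial n (Polynomial.hasseDeriv i a)) =
        Polynomial.hasseDeriv i a * Polynomial.X ^ n := by
      show Polynomial.eval₂ _ _ _ = _
      rw [Polynomial.eval₂_monomial]; rfl
    rw [h2, map_mul, map_pow, embZ_X, mul_assoc]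



def CC : ℂ →+* Bzy := (Polynomial.C : Polynomial ℂ →+* Bzy).comp (Polynomial.C : ℂ →+* Polynomial ℂ)

lemma cB_eq (c : ℂ) : cB c = CC c := rfl

lemma cB_mul (a b : ℂ) : cB (a * b) = cB a * cB b := by
  simp [cB_eq, map_mul]

lemma cB_natCast (n : ℕ) : cB ((n : ℂ)) = (n : Bzy) := by
  simp [cB_eq, map_natCast]

lemma Hy_sub (i : ℕ) (p q : Bzy) : Hy i (p - q) = Hy i p - Hy i q := by
  ext n; simp [Hy_coeff]

lemma bracket_id (P : ℕ → Bzy) (k : ℕ) :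
    Polynomial.X * bracket P k = (Polynomial.X - 1) * Polynomial.C ((P k).coeff 0) + P k := by
  have h0 : (P k - Polynomial.C ((P k).coeff 0)).eval 0 = 0 := by
    rw [Polynomial.eval_sub, Polynomial.eval_C, ← Polynomial.coeff_zero_eq_eval_zero, sub_self]
  have h := Polynomial.modByMonic_add_div (P k - Polynomial.C ((P k).coeff 0))
    Polynomial.X
  rw [Polynomial.modByMonic_X, h0, map_zero, zero_add] at h
  rw [bracket, mul_add, h]
  ring

lemma dy_coeff (p : Bzy) (n : ℕ) : (dy p).coeff n = Polynomial.derivative (p.coeff n) := by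
  rw [dy, Polynomial.sum_def, Polynomial.finset_sum_coeff]
  simp only [Polynomial.coeff_C_mul, Polynomial.coeff_X_pow, mul_ite, mul_one, mul_zero]
  rw [Finset.sum_ite_eq]
  split_ifs with h
  · rfl
  · rw [Polynomial.notMem_support_iff.mp h, map_zero]

lemma dy_iter_coeff (j : ℕ) (p : Bzy) (n : ℕ) :
    ((dy^[j]) p).coeff n = (Polynomial.derivative^[j]) (p.coeff n) := by
  induction j generalizing p with
  | zero => simp
  | succ j ih =>
    rw [Function.iterate_succ_apply, ih, dy_coeff]
    exact (Function.iterate_succ_apply _ _ _).symm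

lemma dy_iter_eq (j : ℕ) (p : Bzy) : (dy^[j]) p = (Nat.factorial j) • Hy j p := by
  ext n
  rw [dy_iter_coeff, Polynomial.coeff_smul (Nat.factorial j) (Hy j p) n, Hy_coeff]
  rw [← Polynomial.factorial_smul_hasseDeriv (R := ℂ) j]
  rfl

lemma aCoef_eq (P : ℕ → Bzy) (j k : ℕ) :
    aCoef P j k = (Nat.factorial j) • diagEval (Hy j (bracket P k)) := by
  have : aCoef P j k = diagEval ((dy^[j]) (bracket P k)) := rfl
  rw [this, dy_iter_eq, map_nsmul]

/-- `E_j^{k}` abbreviation. -/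
def EE (P : ℕ → Bzy) (j k : ℕ) : Bzy := embZ (diagEval (Hy j (bracket P k)))

lemma EE_eq (P : ℕ → Bzy) (j k : ℕ) :
    EE P j k = cB ((Nat.factorial j : ℂ))⁻¹ * embZ (aCoef P j k) := by
  rw [EE, aCoef_eq, map_nsmul, nsmul_eq_mul, ← cB_natCast, ← mul_assoc, ← cB_mul,
    inv_mul_cancel₀ (by exact_mod_cast Nat.factorial_ne_zero j), cB_eq, map_one, one_mul]

/-- `z ↦ 0` evaluation. -/
def z0 : Bzy →+* Polynomial ℂ := Polynomial.evalRingHom 0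

lemma z0_C (a : Polynomial ℂ) : z0 (Polynomial.C a) = a := Polynomial.eval_C

lemma z0_X : z0 (Polynomial.X : Bzy) = 0 := Polynomial.eval_X

lemma z0_embZ (q : Polynomial ℂ) : z0 (embZ q) = Polynomial.C (q.coeff 0) := by
  show Polynomial.eval 0 (q.map Polynomial.C) = _
  rw [Polynomial.eval_map, Polynomial.eval₂_at_zero]

lemma z0_wB : z0 wB = Polynomial.X := by
  rw [wB, yB, map_sub, z0_C, z0_X, sub_zero]

lemma z0_cB (c : ℂ) : z0 (cB c) = Polynomial.C c := by rw [cB, z0_C]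

/-- `1 - ρ + ρ z` as element of `Bzy`. -/
def g0 (ρ : ℝ) : Bzy := cB (1 - (ρ : ℂ)) + cB (ρ : ℂ) * Polynomial.X

lemma g0_eq (ρ : ℝ) : g0 ρ = 1 + cB (ρ : ℂ) * (Polynomial.X - 1) := by
  rw [g0, cB_eq, cB_eq, map_sub, map_one]
  ring

lemma diagEval_g0 (ρ : ℝ) :
    diagEval (g0 ρ) = Polynomial.C (1 - (ρ : ℂ)) + Polynomial.C (ρ : ℂ) * Polynomial.X := by
  rw [g0, map_add, map_mul, diagEval_cB, diagEval_cB, diagEval_X]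

lemma z0_g0 (ρ : ℝ) : z0 (g0 ρ) = Polynomial.C (1 - (ρ : ℂ)) := by
  rw [g0, map_add, map_mul, z0_cB, z0_cB, z0_X, mul_zero, add_zero]



lemma claimC (P : ℕ → Bzy) (j k : ℕ) :
    (Polynomial.X - 1) * embZ (Polynomial.hasseDeriv j ((P k).coeff 0)) +
      embZ (diagEval (Hy j (P k))) = Polynomial.X * EE P j k := by
  have h1 : Hy j (Polynomial.X * bracket P k) =
      Hy j ((Polynomial.X - 1) * Polynomial.C ((P k).coeff 0) + P k) := by
    rw [bracket_id]
  have h2 : (Polynomial.X - 1) * Polynomial.C ((P k).coeff 0) =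
      Polynomial.X * Polynomial.C ((P k).coeff 0) - Polynomial.C ((P k).coeff 0) := by ring
  rw [Hy_X_mul, h2, Hy_add, Hy_sub, Hy_X_mul, Hy_C] at h1
  have h3 := congrArg (fun q => embZ (diagEval q)) h1
  simp only [map_add, map_sub, map_mul, diagEval_X, diagEval_C, embZ_X] at h3
  rw [EE, h3]
  ring

lemma useries_split (ρ : ℝ) :
    constHom (1 - (ρ : ℂ)) + constHom (ρ : ℂ) * useries =
      PowerSeries.C (R := Bzy) (g0 ρ) + PowerSeries.X * PowerSeries.C (R := Bzy) (cB (ρ : ℂ) * wB) := by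
  have hc : ∀ c : ℂ, constHom c = PowerSeries.C (R := Bzy) (cB c) := fun c => rfl
  rw [hc, hc, useries, g0]
  simp only [map_add, map_mul]
  have hw : (PowerSeries.C (R := Bzy)) (yB - Polynomial.X) = PowerSeries.C (R := Bzy) wB := rfl
  rw [hw]
  ring

/-- The bracket `[(z-1)·F(0,u) + F(z,u)]` as a power series. -/
def MM (P : ℕ → Bzy) : PowerSeries Bzy :=
  PowerSeries.C (R := Bzy) (Polynomial.X - 1) *
      PowerSeries.mk (fun m => ∑ k ∈ Finset.range (m + 1),
        PowerSeries.coeff (R := Bzy) (m - k) (substY ((P k).coeff 0))) +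
    PowerSeries.mk (fun m => ∑ k ∈ Finset.range (m + 1),
      PowerSeries.coeff (R := Bzy) (m - k) (substZY (P k)))

/-- `N_n = Σ_{j ≤ n} w^j E_j^{n-j}`. -/
def NN (P : ℕ → Bzy) (n : ℕ) : Bzy :=
  ∑ j ∈ Finset.range (n + 1), wB ^ j * EE P j (n - j)

lemma coeff_MM (P : ℕ → Bzy) (n : ℕ) :
    PowerSeries.coeff (R := Bzy) n (MM P) = Polynomial.X * NN P n := by
  rw [MM, map_add, PowerSeries.coeff_C_mul, PowerSeries.coeff_mk, PowerSeries.coeff_mk,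
    Finset.mul_sum, ← Finset.sum_add_distrib]
  have h1 : ∀ k ∈ Finset.range (n + 1),
      (Polynomial.X - 1) * PowerSeries.coeff (R := Bzy) (n - k) (substY ((P k).coeff 0)) +
        PowerSeries.coeff (R := Bzy) (n - k) (substZY (P k)) =
      (fun j => Polynomial.X * (wB ^ j * EE P j (n - j))) (n + 1 - 1 - k) := by
    intro k hk
    rw [Finset.mem_range] at hk
    simp only
    rw [coeff_substY, coeff_substZY, Nat.add_sub_cancel,
      Nat.sub_sub_self (by omega : k ≤ n)]
    rw [← mul_assoc, mul_comm (Polynomial.X - 1) (wB ^ (n - k)), mul_assoc, ← mul_add,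
      claimC]
    ring
  rw [Finset.sum_congr rfl h1,
    Finset.sum_range_reflect (fun j => Polynomial.X * (wB ^ j * EE P j (n - j))) (n + 1),
    NN, Finset.mul_sum]

lemma star (ρ : ℝ) (P : ℕ → Bzy) (hF : FuncEq ρ P) (m : ℕ) :
    P (m + 1) = g0 ρ * NN P (m + 1) + cB (ρ : ℂ) * wB * NN P m := by
  have hF' : PowerSeries.C (R := Bzy) Polynomial.X * PowerSeries.mk (fun k => P k) =
      (constHom (1 - (ρ : ℂ)) + constHom (ρ : ℂ) * useries) * MM P := hF
  rw [useries_split] at hF'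
  have hc := congrArg (PowerSeries.coeff (R := Bzy) (m + 1)) hF'
  rw [PowerSeries.coeff_C_mul, PowerSeries.coeff_mk, add_mul, map_add,
    PowerSeries.coeff_C_mul, mul_assoc, PowerSeries.coeff_succ_X_mul,
    PowerSeries.coeff_C_mul, coeff_MM, coeff_MM] at hc
  apply mul_left_cancel₀ (Polynomial.X_ne_zero : (Polynomial.X : Bzy) ≠ 0)
  rw [hc]
  ring



lemma z0_g0' (ρ : ℝ) : z0 (g0 ρ) = 1 - Polynomial.C (ρ : ℂ) := by
  rw [g0, map_add, map_mul, z0_cB, z0_cB, z0_X, mul_zero, add_zero, map_sub, map_one]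


lemma term_eq (ρ : ℝ) (P : ℕ → Bzy) (i m : ℕ) (him : i ≤ m) :
    g0 ρ * (wB ^ (i + 1) * EE P (i + 1) (m - i)) +
      cB (ρ : ℂ) * wB * (wB ^ i * EE P i (m - i)) =
    cB ((Nat.factorial (i + 1) : ℂ))⁻¹ * wB ^ (i + 1) * embZ (Acoef ρ P (i + 1) (m + 1)) := by
  rw [EE_eq, EE_eq, Acoef, if_pos ⟨by omega, by omega⟩]
  simp only [Nat.add_sub_cancel, Nat.succ_sub_succ_eq_sub, Nat.sub_zero]
  rw [map_add, map_mul, map_mul, map_mul, map_add, map_one, map_mul, map_sub, map_one,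
    embZ_X, map_natCast embZ, embZ_C, g0_eq]
  have h2 : ((i + 1 : ℕ) : ℂ) ≠ 0 := Nat.cast_ne_zero.mpr (Nat.succ_ne_zero i)
  have h3 : ((Nat.factorial i : ℂ)) ≠ 0 := Nat.cast_ne_zero.mpr (Nat.factorial_ne_zero i)
  have h1 : ((Nat.factorial i : ℂ))⁻¹ =
      ((Nat.factorial (i + 1) : ℂ))⁻¹ * ((i + 1 : ℕ) : ℂ) := by
    rw [Nat.factorial_succ]
    push_cast
    push_cast at h2
    field_simp
  rw [h1, cB_mul, cB_natCast]
  ring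

lemma starstar (ρ : ℝ) (P : ℕ → Bzy) (hF : FuncEq ρ P) (m : ℕ) :
    P (m + 1) = g0 ρ * EE P 0 (m + 1) +
      ∑ i ∈ Finset.range (m + 1),
        cB ((Nat.factorial (i + 1) : ℂ))⁻¹ * wB ^ (i + 1) * embZ (Acoef ρ P (i + 1) (m + 1)) := by
  rw [star ρ P hF m, NN, Finset.sum_range_succ'
    (fun j => wB ^ j * EE P j (m + 1 - j)) (m + 1), NN]
  simp only [Nat.succ_sub_succ_eq_sub, pow_zero, one_mul, Nat.sub_zero]
  rw [mul_add, Finset.mul_sum, Finset.mul_sum, add_right_comm, ← Finset.sum_add_distrib]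
  rw [Finset.sum_congr rfl
    (fun i hi => term_eq ρ P i m (by have := Finset.mem_range.mp hi; omega))]
  exact add_comm _ _

lemma EE0 (P : ℕ → Bzy) (k : ℕ) : EE P 0 k = embZ (aCoef P 0 k) := by
  rw [EE, Hy_zero']
  rfl

lemma a0_diag (P : ℕ → Bzy) (k : ℕ) : aCoef P 0 k = diagEval (bracket P k) := rfl

lemma XsubOne_ne : (Polynomial.X - 1 : Polynomial ℂ) ≠ 0 := by
  have h := Polynomial.X_sub_C_ne_zero (1 : ℂ)
  simpa using h

lemma hdiag (ρ : ℝ) (P : ℕ → Bzy) (hF : FuncEq ρ P) (m : ℕ) :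
    diagEval (P (m + 1)) =
      (1 - Polynomial.C (ρ : ℂ) + Polynomial.C (ρ : ℂ) * Polynomial.X) *
        aCoef P 0 (m + 1) := by
  have h := congrArg diagEval (starstar ρ P hF m)
  rw [map_add, map_mul, map_sum diagEval] at h
  have hz : ∀ i ∈ Finset.range (m + 1),
      diagEval (cB ((Nat.factorial (i + 1) : ℂ))⁻¹ * wB ^ (i + 1) *
        embZ (Acoef ρ P (i + 1) (m + 1))) = 0 := by
    intro i _
    rw [map_mul, map_mul, map_pow, diagEval_wB, zero_pow (Nat.succ_ne_zero i),
      mul_zero, zero_mul]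
  rw [Finset.sum_congr rfl hz, Finset.sum_const_zero, add_zero, EE0, diagEval_embZ] at h
  rw [h, g0, map_add, map_mul, diagEval_cB, diagEval_cB, diagEval_X, map_sub, map_one]

lemma a0C (ρ : ℝ) (P : ℕ → Bzy) (hF : FuncEq ρ P) (m : ℕ) :
    (1 - Polynomial.C (ρ : ℂ)) * aCoef P 0 (m + 1) = (P (m + 1)).coeff 0 := by
  have hd := congrArg diagEval (bracket_id P (m + 1))
  rw [map_mul, diagEval_X, map_add, map_mul, map_sub, diagEval_X, map_one, diagEval_C,
    ← a0_diag, hdiag ρ P hF m] at hd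
  apply mul_left_cancel₀ XsubOne_ne
  linear_combination hd

lemma hzL (ρ : ℝ) (P : ℕ → Bzy) (hF : FuncEq ρ P) (m : ℕ) :
    (P (m + 1)).coeff 0 =
      (1 - Polynomial.C (ρ : ℂ)) * Polynomial.C ((aCoef P 0 (m + 1)).coeff 0) +
      ∑ i ∈ Finset.range (m + 1),
        Polynomial.C ((Nat.factorial (i + 1) : ℂ))⁻¹ * Polynomial.X ^ (i + 1) *
          Polynomial.C ((Acoef ρ P (i + 1) (m + 1)).coeff 0) := by
  have h := congrArg z0 (starstar ρ P hF m)
  rw [map_add, map_mul, map_sum z0, EE0, z0_embZ] at h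
  have hterm : ∀ i ∈ Finset.range (m + 1),
      z0 (cB ((Nat.factorial (i + 1) : ℂ))⁻¹ * wB ^ (i + 1) *
        embZ (Acoef ρ P (i + 1) (m + 1))) =
      Polynomial.C ((Nat.factorial (i + 1) : ℂ))⁻¹ * Polynomial.X ^ (i + 1) *
        Polynomial.C ((Acoef ρ P (i + 1) (m + 1)).coeff 0) := by
    intro i _
    rw [map_mul, map_mul, map_pow, z0_wB, z0_cB, z0_embZ]
  rw [Finset.sum_congr rfl hterm, z0_g0'] at h
  have hL : z0 (P (m + 1)) = (P (m + 1)).coeff 0 :=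
    (Polynomial.coeff_zero_eq_eval_zero _).symm
  rw [hL] at h
  exact h

lemma sum_eval1 (ρ : ℝ) (P : ℕ → Bzy) (hF : FuncEq ρ P) (hB : Boundary ρ P) (m : ℕ) :
    (1 - (ρ : ℂ)) * (aCoef P 0 (m + 1)).coeff 0 =
      - ∑ i ∈ Finset.range (m + 1),
          ((Nat.factorial (i + 1) : ℂ))⁻¹ * (Acoef ρ P (i + 1) (m + 1)).coeff 0 := by
  have h := congrArg (Polynomial.eval 1) (hzL ρ P hF m)
  rw [hB.2 (m + 1) (by omega)] at h
  simp only [Polynomial.eval_add, Polynomial.eval_mul, Polynomial.eval_sub, Polynomial.eval_one,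
    Polynomial.eval_C, Polynomial.eval_pow, Polynomial.eval_X, one_pow, mul_one,
    Polynomial.eval_finset_sum] at h
  linear_combination -h

lemma c0_eq (ρ : ℝ) (P : ℕ → Bzy) (hF : FuncEq ρ P) (hB : Boundary ρ P) (m : ℕ) :
    (P (m + 1)).coeff 0 =
      ∑ i ∈ Finset.range (m + 1),
        Polynomial.C (((Nat.factorial (i + 1) : ℂ))⁻¹ *
            (Acoef ρ P (i + 1) (m + 1)).coeff 0) *
          (Polynomial.X ^ (i + 1) - 1) := by
  rw [hzL ρ P hF m]
  have h1 : (1 - Polynomial.C (ρ : ℂ)) * Polynomial.C ((aCoef P 0 (m + 1)).coeff 0) =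
      Polynomial.C ((1 - (ρ : ℂ)) * (aCoef P 0 (m + 1)).coeff 0) := by
    rw [map_mul, map_sub, map_one]
  rw [h1, sum_eval1 ρ P hF hB m, map_neg,
    map_sum (Polynomial.C : ℂ →+* Polynomial ℂ)]
  have e1 : ∀ i ∈ Finset.range (m + 1),
      Polynomial.C ((Nat.factorial (i + 1) : ℂ))⁻¹ * Polynomial.X ^ (i + 1) *
        Polynomial.C ((Acoef ρ P (i + 1) (m + 1)).coeff 0) =
      Polynomial.C (((Nat.factorial (i + 1) : ℂ))⁻¹ *
          (Acoef ρ P (i + 1) (m + 1)).coeff 0) * Polynomial.X ^ (i + 1) := by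
    intro i _
    rw [map_mul]
    ring
  have e2 : ∀ i ∈ Finset.range (m + 1),
      Polynomial.C (((Nat.factorial (i + 1) : ℂ))⁻¹ *
          (Acoef ρ P (i + 1) (m + 1)).coeff 0) * (Polynomial.X ^ (i + 1) - 1) =
      Polynomial.C (((Nat.factorial (i + 1) : ℂ))⁻¹ *
          (Acoef ρ P (i + 1) (m + 1)).coeff 0) * Polynomial.X ^ (i + 1) -
        Polynomial.C (((Nat.factorial (i + 1) : ℂ))⁻¹ *
          (Acoef ρ P (i + 1) (m + 1)).coeff 0) := by
    intro i _
    ring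
  rw [Finset.sum_congr rfl e1, Finset.sum_congr rfl e2, Finset.sum_sub_distrib]
  abel

lemma ha0 (ρ : ℝ) (P : ℕ → Bzy) (hF : FuncEq ρ P) (h1ρ : (1 - (ρ : ℂ)) ≠ 0) (m : ℕ) :
    aCoef P 0 (m + 1) = Polynomial.C ((1 - (ρ : ℂ))⁻¹) * (P (m + 1)).coeff 0 := by
  rw [← a0C ρ P hF m, ← mul_assoc]
  have h : Polynomial.C ((1 - (ρ : ℂ))⁻¹) * (1 - Polynomial.C (ρ : ℂ)) = 1 := by
    have h2 : (1 - Polynomial.C (ρ : ℂ)) = Polynomial.C (1 - (ρ : ℂ)) := by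
      rw [map_sub, map_one]
    rw [h2, ← map_mul, inv_mul_cancel₀ h1ρ, map_one]
  rw [h, one_mul]

lemma sum_Icc_one (f : ℕ → Bzy) (m : ℕ) (h0 : f 0 = 0) :
    ∑ j ∈ Finset.Icc 1 (m + 1), f j = ∑ i ∈ Finset.range (m + 1), f (i + 1) := by
  have hset : Finset.range (m + 2) = insert 0 (Finset.Icc 1 (m + 1)) := by
    ext x
    simp only [Finset.mem_range, Finset.mem_insert, Finset.mem_Icc]
    omega
  have h1 := Finset.sum_range_succ' f (m + 1)
  rw [hset, Finset.sum_insert (by simp)] at h1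
  simpa [h0] using h1


end Stmt10
end

theorem stmt10 (ρ : ℝ) (hρ : ρ ∈ Set.Ioo (0 : ℝ) 1) (P : ℕ → Bzy)
    (hF : FuncEq ρ P) (hI : IndepY P) (hB : Boundary ρ P) :
    ∀ k : ℕ, 1 ≤ k →
      P k = ∑ j ∈ Finset.Icc 1 k,
        (cB ((j.factorial : ℂ)⁻¹) * (yB - Polynomial.X) ^ j * embZ (Acoef ρ P j k) +
          (1 + cB (ρ : ℂ) * (Polynomial.X - 1)) *
            cB ((1 - (ρ : ℂ))⁻¹ * (j.factorial : ℂ)⁻¹ * (Acoef ρ P j k).eval 0) *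
            (Polynomial.X ^ j - 1)) := by
  intro k hk
  obtain ⟨m, rfl⟩ : ∃ m, k = m + 1 := ⟨k - 1, by omega⟩
  have h1ρ : (1 - (ρ : ℂ)) ≠ 0 := by
    have h2 : (ρ : ℂ) ≠ 1 := by exact_mod_cast ne_of_lt hρ.2
    exact sub_ne_zero.mpr (Ne.symm h2)
  have hw : (yB - Polynomial.X : Bzy) = Stmt10.wB := rfl
  rw [hw]
  have hIcc := Stmt10.sum_Icc_one (fun j =>
      cB ((j.factorial : ℂ)⁻¹) * Stmt10.wB ^ j * embZ (Acoef ρ P j (m + 1)) +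
        (1 + cB (ρ : ℂ) * (Polynomial.X - 1)) *
          cB ((1 - (ρ : ℂ))⁻¹ * (j.factorial : ℂ)⁻¹ * (Acoef ρ P j (m + 1)).eval 0) *
          (Polynomial.X ^ j - 1)) m (by simp [Acoef])
  rw [hIcc]
  rw [Stmt10.starstar ρ P hF m, Stmt10.EE0, Stmt10.ha0 ρ P hF h1ρ m,
    Stmt10.c0_eq ρ P hF hB m]
  rw [map_mul, Stmt10.embZ_C, map_sum embZ, Finset.mul_sum, Finset.mul_sum,
    ← Finset.sum_add_distrib]
  refine Finset.sum_congr rfl fun i hi => ?_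
  rw [map_mul, map_sub, map_pow, Stmt10.embZ_X, map_one, Stmt10.embZ_C, Stmt10.g0_eq,
    ← Polynomial.coeff_zero_eq_eval_zero, Stmt10.cB_mul, Stmt10.cB_mul, Stmt10.cB_mul]
  ring
end
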